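/- arXiv:cs/0102009 — 2 statements merged into one kernel-verified Lean document; each statement's English description precedes it below -/
import Mathlib

section
/- Let G=(A,B,E) be a bipartite graph. Then G is componentwise biconnected if and only if η(G) = 0, where η(G) = max{ max_{u∈G} D(G,u) + C(G) − 2, M(Λ(G)) + R(Λ(G)) }. -/
open SimpleGraph

namespace AugBic

noncomputable section

variable {V : Type*}

/-- Two vertices are biconnected: they are in the same connected component and remain so
after the removal of any single edge or any single vertex other than either of them. -/
def BiconnPair (G : SimpleGraph V) (u v : V) : Prop :=
  G.Reachable u v ∧
  (∀ e ∈ G.edgeSet, (G.deleteEdges {e}).Reachable u v) ∧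
  (∀ w : V, ∀ hu : u ≠ w, ∀ hv : v ≠ w,
    (G.induce {x | x ≠ w}).Reachable ⟨u, hu⟩ ⟨v, hv⟩)

/-- A set of vertices is biconnected if every pair of its vertices is biconnected. -/
def BiconnSet (G : SimpleGraph V) (S : Set V) : Prop :=
  ∀ u ∈ S, ∀ v ∈ S, BiconnPair G u v

/-- A block: (the induced subgraph on) a maximal biconnected set of vertices. -/
def IsBlock (G : SimpleGraph V) (S : Set V) : Prop :=
  S.Nonempty ∧ BiconnSet G S ∧ ∀ T : Set V, S ⊆ T → BiconnSet G T → T = S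

/-- A cut vertex: its removal increases the number of connected components. -/
def IsCutVertex (G : SimpleGraph V) (v : V) : Prop :=
  Nat.card G.ConnectedComponent <
    Nat.card ((G.induce {x | x ≠ v}).ConnectedComponent)

/-- A cut edge: its removal increases the number of connected components. -/
def IsCutEdge (G : SimpleGraph V) (e : Sym2 V) : Prop :=
  e ∈ G.edgeSet ∧
    Nat.card G.ConnectedComponent <
      Nat.card ((G.deleteEdges {e}).ConnectedComponent)

/-- A pendant block: a singular block consisting of a vertex of degree 1, or a
nonsingular block containing exactly one cut vertex. -/
def IsPendantBlock (G : SimpleGraph V) (S : Set V) : Prop :=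
  IsBlock G S ∧
    ((∃ v, S = {v} ∧ (G.neighborSet v).ncard = 1) ∨
     (1 < S.ncard ∧ ∃! v, v ∈ S ∧ IsCutVertex G v))

/-- Λ(G): the set of pendant blocks of `G`. -/
def pendantBlocks (G : SimpleGraph V) : Set (Set V) :=
  {S | IsPendantBlock G S}

/-- A block is of type `P` (for `P = A` or `P = B`) if all its noncut vertices lie in `P`. -/
def TypeOnly (G : SimpleGraph V) (P : Set V) (S : Set V) : Prop :=
  ∀ v ∈ S, ¬IsCutVertex G v → v ∈ P

/-- A block is type AB if it has a noncut vertex in `A` and a noncut vertex in `B`. -/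
def TypeAB (G : SimpleGraph V) (A B : Set V) (S : Set V) : Prop :=
  (∃ v ∈ S, ¬IsCutVertex G v ∧ v ∈ A) ∧ (∃ v ∈ S, ¬IsCutVertex G v ∧ v ∈ B)

/-- A legal pair: two distinct pendant blocks, not both of type A and not both of type B. -/
def LegalPair (G : SimpleGraph V) (A B : Set V) (S T : Set V) : Prop :=
  IsPendantBlock G S ∧ IsPendantBlock G T ∧ S ≠ T ∧
  ¬(TypeOnly G A S ∧ TypeOnly G A T) ∧ ¬(TypeOnly G B S ∧ TypeOnly G B T)

/-- A legal edge: a vertex pair in `A × B` that is not an edge of `G`. -/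
def LegalEdge (G : SimpleGraph V) (A B : Set V) (a b : V) : Prop :=
  a ∈ A ∧ b ∈ B ∧ ¬G.Adj a b

/-- A binding edge for a legal pair: a legal edge joining two noncut vertices,
one from each block of the pair. -/
def BindingEdge (G : SimpleGraph V) (A B : Set V) (S T : Set V) (a b : V) : Prop :=
  LegalEdge G A B a b ∧
  ((a ∈ S ∧ ¬IsCutVertex G a ∧ b ∈ T ∧ ¬IsCutVertex G b) ∨
   (a ∈ T ∧ ¬IsCutVertex G a ∧ b ∈ S ∧ ¬IsCutVertex G b))

/-- A legal matching of a set `Λ'` of pendant blocks: a set of legal pairs between elements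
of `Λ'` such that each element of `Λ'` belongs to at most one pair. -/
def IsLegalMatching (G : SimpleGraph V) (A B : Set V) (Λ' : Set (Set V))
    (N : Set (Set V × Set V)) : Prop :=
  (∀ q ∈ N, q.1 ∈ Λ' ∧ q.2 ∈ Λ' ∧ LegalPair G A B q.1 q.2) ∧
  (∀ q ∈ N, ∀ q' ∈ N, q ≠ q' →
    ({q.1, q.2} ∩ {q'.1, q'.2} : Set (Set V)) = ∅)

/-- M(Λ'): the maximum cardinality of a legal matching of `Λ'`. -/
def maxMatching (G : SimpleGraph V) (A B : Set V) (Λ' : Set (Set V)) : ℕ :=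
  sSup {k | ∃ N, IsLegalMatching G A B Λ' N ∧ N.ncard = k}

/-- R(Λ') = |Λ'| − 2·M(Λ'). -/
def Rnum (G : SimpleGraph V) (A B : Set V) (Λ' : Set (Set V)) : ℕ :=
  Λ'.ncard - 2 * maxMatching G A B Λ'

/-- A graph is componentwise biconnected if every connected component is a block. -/
def ComponentwiseBiconnected (G : SimpleGraph V) : Prop :=
  ∀ c : G.ConnectedComponent, IsBlock G c.supp

/-- D(G,u): the number of connected components of X − {u}, where X is the
connected component of G containing u. -/
def Dnum (G : SimpleGraph V) (u : V) : ℕ :=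
  Nat.card ((G.induce {v | G.Reachable u v ∧ v ≠ u}).ConnectedComponent)

/-- C(G): the number of connected components of G that are not blocks. -/
def Cnum (G : SimpleGraph V) : ℕ :=
  Nat.card {c : G.ConnectedComponent // ¬IsBlock G c.supp}

/-- η(G) = max{ max_u D(G,u) + C(G) − 2, M(Λ(G)) + R(Λ(G)) }. -/
def eta (G : SimpleGraph V) (A B : Set V) : ℕ :=
  max ((⨆ u : V, Dnum G u) + Cnum G - 2)
      (maxMatching G A B (pendantBlocks G) + Rnum G A B (pendantBlocks G))

/-- A biconnector: a set of legal edges whose addition makes `G` componentwise biconnected. -/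
def IsBiconnector (G : SimpleGraph V) (A B : Set V) (L : Set (Sym2 V)) : Prop :=
  (∀ e ∈ L, ∃ a b : V, e = s(a, b) ∧ LegalEdge G A B a b) ∧
  ComponentwiseBiconnected (G ⊔ SimpleGraph.fromEdgeSet L)

/-- B(G): the minimum number of edges of a biconnector of `G`. -/
def Bnum (G : SimpleGraph V) (A B : Set V) : ℕ :=
  sInf {k | ∃ L, IsBiconnector G A B L ∧ L.ncard = k}

/-- A connected component is an isolated edge. -/
def IsIsolatedEdgeComp (G : SimpleGraph V) (c : G.ConnectedComponent) : Prop :=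
  ∃ u v : V, G.Adj u v ∧ c.supp = {u, v}

/-- C1(G): the number of components that are neither isolated edges nor blocks. -/
def C1num (G : SimpleGraph V) : ℕ :=
  Nat.card {c : G.ConnectedComponent // ¬IsIsolatedEdgeComp G c ∧ ¬IsBlock G c.supp}

/-- C2(G): the number of isolated-edge components. -/
def C2num (G : SimpleGraph V) : ℕ :=
  Nat.card {c : G.ConnectedComponent // IsIsolatedEdgeComp G c}

/-- C3(G): the number of components that are nonsingular blocks. -/
def C3num (G : SimpleGraph V) : ℕ :=
  Nat.card {c : G.ConnectedComponent // IsBlock G c.supp ∧ 1 < c.supp.ncard}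

/-- A cut vertex `u` is critical if D(G,u) − 1 = M(Λ(G)) + R(Λ(G)). -/
def Critical (G : SimpleGraph V) (A B : Set V) (u : V) : Prop :=
  IsCutVertex G u ∧
    Dnum G u - 1 = maxMatching G A B (pendantBlocks G) + Rnum G A B (pendantBlocks G)

/-- A cut vertex `u` is massive if D(G,u) − 1 > M(Λ(G)) + R(Λ(G)). -/
def Massive (G : SimpleGraph V) (A B : Set V) (u : V) : Prop :=
  IsCutVertex G u ∧
    maxMatching G A B (pendantBlocks G) + Rnum G A B (pendantBlocks G) < Dnum G u - 1

/-- Vertices of the block tree: blocks (b-vertices), cut vertices and cut edges (c-vertices). -/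
inductive BTV (V : Type*) where
  | blk : Set V → BTV V
  | cv : V → BTV V
  | ce : Sym2 V → BTV V

/-- Valid vertices of the block tree of `G`: nonsingular blocks and singular pendant blocks
(b-vertices), together with cut vertices and cut edges (c-vertices). -/
def IsBTVert (G : SimpleGraph V) : BTV V → Prop
  | .blk S => IsBlock G S ∧ (1 < S.ncard ∨ ∃ v, S = {v} ∧ (G.neighborSet v).ncard = 1)
  | .cv v => IsCutVertex G v
  | .ce e => IsCutEdge G e

/-- Adjacency of the block tree: a nonsingular block is joined to each cut vertex in it,
a cut vertex to each cut edge incident to it, and a cut edge to each singular (pendant)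
block containing one of its endpoints. -/
def btAdj (G : SimpleGraph V) : BTV V → BTV V → Prop
  | .blk _, .blk _ => False
  | .blk S, .cv c => 1 < S.ncard ∧ c ∈ S
  | .blk S, .ce e => ∃ v, S = {v} ∧ v ∈ e
  | .cv c, .blk S => 1 < S.ncard ∧ c ∈ S
  | .cv _, .cv _ => False
  | .cv c, .ce e => c ∈ e
  | .ce e, .blk S => ∃ v, S = {v} ∧ v ∈ e
  | .ce e, .cv c => c ∈ e
  | .ce _, .ce _ => False

/-- The vertex type of the block tree Ψ(G). -/
abbrev BTVert (G : SimpleGraph V) := {x : BTV V // IsBTVert G x}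

/-- The block tree Ψ(G). -/
def blockTree (G : SimpleGraph V) : SimpleGraph (BTVert G) where
  Adj x y := btAdj G x.1 y.1
  symm := by
    constructor
    rintro ⟨x, hx⟩ ⟨y, hy⟩ h
    cases x <;> cases y <;> simp_all [btAdj]
  loopless := by
    constructor
    rintro ⟨x, hx⟩ h
    cases x <;> simp_all [btAdj]

/-- Degree of a vertex of the block tree. -/
def btDeg (G : SimpleGraph V) (x : BTVert G) : ℕ :=
  Nat.card ((blockTree G).neighborSet x)

/-- A path is branchless if all its internal vertices have degree two. -/
def Branchless {W : Type*} (T : SimpleGraph W) {x y : W} (p : T.Walk x y) : Prop :=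
  p.IsPath ∧ ∀ z ∈ p.support, z ≠ x → z ≠ y → Nat.card (T.neighborSet z) = 2

/-- A leaf clings to a vertex `v` if there is a branchless path between it and `v`. -/
def Clings {W : Type*} (T : SimpleGraph W) (l v : W) : Prop :=
  ∃ p : T.Walk l v, Branchless T p


section Aux

variable {G : SimpleGraph V}

/-- From a walk whose support lies in `S`, get reachability in the induced subgraph. -/
lemma reachable_induce_of_walk {S : Set V} :
    ∀ {x y : V} (p : G.Walk x y), (∀ w ∈ p.support, w ∈ S) →
    ∀ (hx : x ∈ S) (hy : y ∈ S), (G.induce S).Reachable ⟨x, hx⟩ ⟨y, hy⟩ := by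
  intro x y p
  induction p with
  | nil =>
    intro _ hx hy
    exact Reachable.refl _
  | @cons a b c h p ih =>
    intro hsupp hx hy
    have hb : b ∈ S := hsupp b (by simp)
    have hadj : (G.induce S).Adj ⟨a, hx⟩ ⟨b, hb⟩ := h
    exact hadj.reachable.trans (ih (fun w hw => hsupp w (by simp [hw])) hb hy)

/-- From reachability in an induced subgraph, get a walk whose support lies in `S`. -/
lemma walk_of_reachable_induce {S : Set V} {x y : V} {hx : x ∈ S} {hy : y ∈ S}
    (h : (G.induce S).Reachable ⟨x, hx⟩ ⟨y, hy⟩) :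
    ∃ p : G.Walk x y, ∀ w ∈ p.support, w ∈ S := by
  obtain ⟨p⟩ := h
  refine ⟨p.map (SimpleGraph.Embedding.induce S).toHom, ?_⟩
  intro w hw
  replace hw : w ∈ (p.map (SimpleGraph.Embedding.induce S).toHom).support := hw
  rw [SimpleGraph.Walk.support_map] at hw
  obtain ⟨⟨w', hw'⟩, _, rfl⟩ := List.mem_map.mp hw
  exact hw'

lemma reachable_of_mem_support {x y w : V} (p : G.Walk x y) (hw : w ∈ p.support) :
    G.Reachable x w := by
  classical
  exact ⟨p.takeUntil w hw⟩

/-- In a componentwise biconnected graph, D(G,u) ≤ 1. -/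
lemma dnum_le_one_of_cb (hG : ComponentwiseBiconnected G) (u : V) : Dnum G u ≤ 1 := by
  have hsub : Subsingleton ((G.induce {v | G.Reachable u v ∧ v ≠ u}).ConnectedComponent) := by
    constructor
    intro c1 c2
    refine ConnectedComponent.ind (fun a => ConnectedComponent.ind (fun b => ?_) c2) c1
    obtain ⟨a, ha⟩ := a
    obtain ⟨b, hb⟩ := b
    have hbs := (hG (G.connectedComponentMk u)).2.1
    have haM : a ∈ (G.connectedComponentMk u).supp := ConnectedComponent.sound ha.1.symm
    have hbM : b ∈ (G.connectedComponentMk u).supp := ConnectedComponent.sound hb.1.symm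
    have hpair := hbs a haM b hbM
    have h3 := hpair.2.2 u ha.2 hb.2
    obtain ⟨p, hp⟩ := walk_of_reachable_induce h3
    have hpS : ∀ w ∈ p.support, w ∈ {v | G.Reachable u v ∧ v ≠ u} :=
      fun w hw => ⟨ha.1.trans (reachable_of_mem_support p hw), hp w hw⟩
    exact ConnectedComponent.sound (reachable_induce_of_walk p hpS ha hb)
  calc Dnum G u ≤ Nat.card (Fin 1) :=
        Nat.card_le_card_of_injective (fun _ => (0 : Fin 1))
          (fun a b _ => Subsingleton.elim a b)
    _ = 1 := by simp

/-- In a componentwise biconnected graph, there are no cut vertices. -/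
lemma no_cut_of_cb [Fintype V] (hG : ComponentwiseBiconnected G) (v : V) :
    ¬IsCutVertex G v := by
  intro hcut
  have hinj : Function.Injective
      (ConnectedComponent.map ((SimpleGraph.Embedding.induce {x | x ≠ v}).toHom :
        G.induce {x | x ≠ v} →g G)) := by
    intro c1 c2 h
    induction c1 using ConnectedComponent.ind with | _ a =>
    induction c2 using ConnectedComponent.ind with | _ b =>
    obtain ⟨a, ha⟩ := a
    obtain ⟨b, hb⟩ := b
    simp only [ConnectedComponent.map_mk] at h
    have hab : G.Reachable a b := ConnectedComponent.exact h
    have hbs := (hG (G.connectedComponentMk a)).2.1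
    have haM : a ∈ (G.connectedComponentMk a).supp := rfl
    have hbM : b ∈ (G.connectedComponentMk a).supp := ConnectedComponent.sound hab.symm
    have hpair := hbs a haM b hbM
    exact ConnectedComponent.sound (hpair.2.2 v ha hb)
  exact absurd (Nat.card_le_card_of_injective _ hinj) (not_le.mpr hcut)

/-- In a componentwise biconnected graph, there are no pendant blocks. -/
lemma no_pendant_of_cb [Fintype V] (hG : ComponentwiseBiconnected G) :
    pendantBlocks G = ∅ := by
  ext S
  simp only [pendantBlocks, Set.mem_setOf_eq, Set.mem_empty_iff_false, iff_false]
  rintro ⟨hblock, hcase⟩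
  rcases hcase with ⟨v, rfl, hdeg⟩ | ⟨-, w, ⟨-, hw⟩, -⟩
  · -- singular pendant block {v} with deg v = 1
    have hsupp : (G.connectedComponentMk v).supp = {v} := by
      refine hblock.2.2 _ ?_ (hG _).2.1
      intro x hx
      simp only [Set.mem_singleton_iff] at hx
      subst hx; rfl
    obtain ⟨w, hw⟩ := Set.ncard_eq_one.mp (by simpa using hdeg)
    have hwv : w ∈ G.neighborSet v := by rw [hw]; rfl
    have hwsupp : w ∈ (G.connectedComponentMk v).supp :=
      ConnectedComponent.sound (hwv : G.Adj v w).symm.reachable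
    rw [hsupp] at hwsupp
    have hwvv : w = v := Set.mem_singleton_iff.mp hwsupp
    subst hwvv
    exact G.irrefl hwv
  · exact no_cut_of_cb hG w hw

lemma maxMatching_empty (A B : Set V) : maxMatching G A B ∅ = 0 := by
  unfold maxMatching
  rw [show {k | ∃ N, IsLegalMatching G A B ∅ N ∧ N.ncard = k} = ({0} : Set ℕ) from ?_,
    csSup_singleton]
  ext k
  simp only [Set.mem_setOf_eq, Set.mem_singleton_iff]
  constructor
  · rintro ⟨N, hN, rfl⟩
    have : N = ∅ := by
      ext q
      simp only [Set.mem_empty_iff_false, iff_false]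
      intro hq
      exact (hN.1 q hq).1
    simp [this]
  · rintro rfl
    exact ⟨∅, ⟨fun q hq => absurd hq (Set.notMem_empty q),
      fun q hq => absurd hq (Set.notMem_empty q)⟩, Set.ncard_empty _⟩

/-- Components are maximal, so a component is a block iff its support is biconnected. -/
lemma isBlock_supp_iff (c : G.ConnectedComponent) :
    IsBlock G c.supp ↔ BiconnSet G c.supp := by
  constructor
  · exact fun h => h.2.1
  · intro h
    obtain ⟨x, hx⟩ := c.exists_rep
    refine ⟨⟨x, hx.symm ▸ rfl⟩, h, ?_⟩
    intro T hsub hT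
    have hxT : x ∈ T := hsub (hx ▸ rfl)
    ext t
    constructor
    · intro ht
      have := (hT x hxT t ht).1
      exact hx ▸ (ConnectedComponent.sound this.symm : _)
    · exact fun ht => hsub ht

end Aux

lemma reach_delete_of_reach {G : SimpleGraph V} {a b : V}
    (hr : (G.deleteEdges {s(a, b)}).Reachable a b)
    {x y : V} (h : G.Reachable x y) : (G.deleteEdges {s(a, b)}).Reachable x y := by
  obtain ⟨p⟩ := h
  induction p with
  | nil => exact Reachable.refl _
  | @cons c d e hcd q ih =>
    refine Reachable.trans ?_ ih
    by_cases hce : s(c, d) = s(a, b)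
    · rcases Sym2.eq_iff.mp hce with ⟨rfl, rfl⟩ | ⟨rfl, rfl⟩
      · exact hr
      · exact hr.symm
    · exact (SimpleGraph.deleteEdges_adj.mpr ⟨hcd, by simpa using hce⟩).reachable

theorem stmt_4 [Fintype V] (G : SimpleGraph V) (A B : Set V)
    (hdisj : Disjoint A B) (hcov : A ∪ B = Set.univ)
    (hbip : ∀ u v : V, G.Adj u v → (u ∈ A ∧ v ∈ B) ∨ (u ∈ B ∧ v ∈ A)) :
    ComponentwiseBiconnected G ↔ eta G A B = 0 := by
  constructor
  · intro hG
    have hC : Cnum G = 0 := by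
      have : IsEmpty {c : G.ConnectedComponent // ¬IsBlock G c.supp} :=
        ⟨fun x => x.2 (hG x.1)⟩
      exact Nat.card_of_isEmpty
    have hsup : (⨆ u : V, Dnum G u) ≤ 1 := by
      rcases isEmpty_or_nonempty V with h | h
      · rw [ciSup_of_empty]; exact Nat.zero_le 1
      · exact ciSup_le (fun u => dnum_le_one_of_cb hG u)
    have hΛ : pendantBlocks G = ∅ := no_pendant_of_cb hG
    unfold eta Rnum
    rw [hΛ, maxMatching_empty, hC, Set.ncard_empty]
    have h2 : (⨆ u : V, Dnum G u) + 0 - 2 = 0 := by omega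
    rw [h2]
    simp
  · intro heta
    intro c
    by_contra hcb
    unfold eta at heta
    rw [Nat.max_eq_zero_iff] at heta
    obtain ⟨h1, h2⟩ := heta
    have h1' : (⨆ u : V, Dnum G u) + Cnum G ≤ 2 := Nat.le_of_sub_eq_zero h1
    have hC1 : 0 < Cnum G := by
      unfold Cnum
      have : Nonempty {c : G.ConnectedComponent // ¬IsBlock G c.supp} := ⟨⟨c, hcb⟩⟩
      exact Nat.card_pos
    -- any vertex with Dnum ≥ 2 gives a contradiction
    have hbig : ∀ w : V, 2 ≤ Dnum G w → False := by
      intro w hw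
      have hle : Dnum G w ≤ ⨆ u : V, Dnum G u :=
        le_ciSup (Set.Finite.bddAbove (Set.finite_range (Dnum G))) w
      omega
    -- a pendant block gives a contradiction
    have hpend : ∀ S : Set V, IsPendantBlock G S → False := by
      intro S hS
      have hcard : 0 < (pendantBlocks G).ncard :=
        (Set.ncard_pos (Set.toFinite _)).mpr ⟨S, hS⟩
      unfold Rnum at h2
      omega
    -- the component c is not biconnected
    have hnb : ¬BiconnSet G c.supp := fun h => hcb ((isBlock_supp_iff c).mpr h)
    unfold BiconnSet at hnb
    push_neg at hnb
    obtain ⟨u, hu, v, hv, hnp⟩ := hnb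
    have hreach : G.Reachable u v := by
      rw [ConnectedComponent.mem_supp_iff] at hu hv
      exact ConnectedComponent.exact (hu.trans hv.symm)
    have hnp' : ¬((∀ e ∈ G.edgeSet, (G.deleteEdges {e}).Reachable u v) ∧
        (∀ w : V, ∀ hu : u ≠ w, ∀ hv : v ≠ w,
          (G.induce {x | x ≠ w}).Reachable ⟨u, hu⟩ ⟨v, hv⟩)) := by
      intro h
      exact hnp ⟨hreach, h.1, h.2⟩
    rw [not_and_or] at hnp'
    rcases hnp' with h2f | h3f
    · -- an edge whose deletion separates u and v
      push_neg at h2f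
      obtain ⟨e, he, hnr⟩ := h2f
      induction e using Sym2.ind with | _ a b =>
      have hab : G.Adj a b := (SimpleGraph.mem_edgeSet G).mp he
      have hnab : ¬(G.deleteEdges {s(a, b)}).Reachable a b := by
        intro hr
        exact hnr (reach_delete_of_reach hr hreach)
      by_cases hA : ∃ x, x ≠ a ∧ (G.deleteEdges {s(a, b)}).Reachable a x
      · -- a has another vertex in its G−e component: Dnum G a ≥ 2
        obtain ⟨x, hxa, hxr⟩ := hA
        refine hbig a ?_
        have hbS : b ∈ {z | G.Reachable a z ∧ z ≠ a} := ⟨hab.reachable, hab.ne.symm⟩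
        have hxS : x ∈ {z | G.Reachable a z ∧ z ≠ a} :=
          ⟨hxr.mono (SimpleGraph.deleteEdges_le _), hxa⟩
        have hne : (G.induce {z | G.Reachable a z ∧ z ≠ a}).connectedComponentMk ⟨x, hxS⟩ ≠
            (G.induce {z | G.Reachable a z ∧ z ≠ a}).connectedComponentMk ⟨b, hbS⟩ := by
          intro heq
          obtain ⟨q, hq⟩ := walk_of_reachable_induce (ConnectedComponent.exact heq)
          have hedges : ∀ e' ∈ q.edges, e' ∉ ({s(a, b)} : Set (Sym2 V)) := by
            intro e' he' hmem
            rw [Set.mem_singleton_iff] at hmem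
            subst hmem
            exact (hq a (q.fst_mem_support_of_mem_edges he')).2 rfl
          exact hnab (hxr.trans ⟨q.toDeleteEdges _ hedges⟩)
        unfold Dnum
        exact Finite.one_lt_card_iff_nontrivial.mpr ⟨_, _, hne⟩
      · -- a is isolated in G−e: {a} is a pendant block
        push_neg at hA
        have hAneg : ∀ x, (G.deleteEdges {s(a, b)}).Reachable a x → x = a := by
          intro x hx
          by_contra hxa
          exact hA x hxa hx
        have hblk : IsBlock G {a} := by
          refine ⟨⟨a, rfl⟩, ?_, ?_⟩
          · intro u' hu' v' hv'
            rw [Set.mem_singleton_iff] at hu' hv'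
            subst hu'; subst hv'
            exact ⟨Reachable.refl _, fun e _ => Reachable.refl _,
              fun w hw1 hw2 => Reachable.refl _⟩
          · intro T hsub hT
            ext t
            simp only [Set.mem_singleton_iff]
            constructor
            · intro ht
              have hp := hT t ht a (hsub rfl)
              have := (hp.2.1 s(a, b) he).symm
              exact hAneg t this
            · rintro rfl
              exact hsub rfl
        have hdeg : G.neighborSet a = {b} := by
          ext y
          simp only [SimpleGraph.mem_neighborSet, Set.mem_singleton_iff]
          constructor
          · intro hy
            by_contra hyb
            have hne' : s(a, y) ≠ s(a, b) := by
              intro hcontra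
              rcases Sym2.eq_iff.mp hcontra with ⟨-, h'⟩ | ⟨h', h''⟩
              · exact hyb h'
              · exact G.irrefl (h' ▸ hab)
            have : (G.deleteEdges {s(a, b)}).Adj a y :=
              SimpleGraph.deleteEdges_adj.mpr ⟨hy, by simpa using hne'⟩
            exact hy.ne' (hAneg y this.reachable)
          · rintro rfl
            exact hab
        exact hpend {a} ⟨hblk, Or.inl ⟨a, rfl, by rw [hdeg]; exact Set.ncard_singleton b⟩⟩
    · -- a vertex whose deletion separates u and v
      push_neg at h3f
      obtain ⟨w, huw, hvw, hnr⟩ := h3f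
      have huwr : G.Reachable u w := by
        by_contra hwr
        obtain ⟨p⟩ := hreach
        have hps : ∀ z ∈ p.support, z ∈ {x | x ≠ w} := by
          intro z hz
          intro hzw
          exact hwr (hzw ▸ reachable_of_mem_support p hz)
        exact hnr (reachable_induce_of_walk p hps huw hvw)
      refine hbig w ?_
      have huS : u ∈ {x | G.Reachable w x ∧ x ≠ w} := ⟨huwr.symm, huw⟩
      have hvS : v ∈ {x | G.Reachable w x ∧ x ≠ w} := ⟨huwr.symm.trans hreach, hvw⟩
      have hne : (G.induce {x | G.Reachable w x ∧ x ≠ w}).connectedComponentMk ⟨u, huS⟩ ≠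
          (G.induce {x | G.Reachable w x ∧ x ≠ w}).connectedComponentMk ⟨v, hvS⟩ := by
        intro heq
        obtain ⟨q, hq⟩ := walk_of_reachable_induce (ConnectedComponent.exact heq)
        exact hnr (reachable_induce_of_walk q (fun z hz => (hq z hz).2) huw hvw)
      unfold Dnum
      exact Finite.one_lt_card_iff_nontrivial.mpr ⟨_, _, hne⟩

end
end AugBic
end

section
/- Let G=(A,B,E) be a bipartite graph with |A| ≥ 2 and |B| ≥ 2. Then B(G) ≥ η(G), where B(G) is the minimum size of a biconnector of G and η(G) = max{ max_{u∈G} D(G,u) + C(G) − 2, M(Λ(G)) + R(Λ(G)) }. -/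
open SimpleGraph

namespace AugBic

noncomputable section

variable {V : Type*}

/-! ### Auxiliary lemmas for the lower bound -/

section Aux

open SimpleGraph Walk

/-- Inclusion homomorphism of an induced subgraph. -/
def inclHom {W : Type*} (G : SimpleGraph W) (s : Set W) : G.induce s →g G where
  toFun := Subtype.val
  map_rel' := fun h => h

@[simp] lemma inclHom_apply {W : Type*} (G : SimpleGraph W) (s : Set W) (a : s) :
    inclHom G s a = a.val := rfl

lemma walk_closed {W : Type*} {K : SimpleGraph W} {S : Set W}
    (hS : ∀ ⦃x y : W⦄, x ∈ S → K.Adj x y → y ∈ S) :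
    ∀ {a b : W}, K.Walk a b → a ∈ S → b ∈ S
  | _, _, Walk.nil, ha => ha
  | _, _, Walk.cons h p, ha => walk_closed hS p (hS ha h)

lemma walk_support_closed {W : Type*} {K : SimpleGraph W} {S : Set W}
    (hS : ∀ ⦃x y : W⦄, x ∈ S → K.Adj x y → y ∈ S)
    {a b : W} (p : K.Walk a b) (ha : a ∈ S) : ∀ z ∈ p.support, z ∈ S := by
  induction p with
  | nil => intro z hz; rw [Walk.support_nil] at hz; simp at hz; simpa [hz]
  | @cons u v w h p ih =>
      intro z hz
      rw [Walk.support_cons] at hz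
      rcases List.mem_cons.1 hz with rfl | hz
      · exact ha
      · exact ih (hS ha h) z hz

lemma reachable_induce_of_walk_s5 {W : Type*} {K : SimpleGraph W} {s : Set W} :
    ∀ {a b : W} (p : K.Walk a b), (∀ z ∈ p.support, z ∈ s) → ∀ (ha : a ∈ s) (hb : b ∈ s),
    (K.induce s).Reachable ⟨a, ha⟩ ⟨b, hb⟩ := by
  intro a b p
  induction p with
  | nil => intro _ ha hb; rfl
  | @cons u v w h p ih =>
      intro hsup ha hb
      have hv : v ∈ s := hsup v (by rw [Walk.support_cons]; exact List.mem_cons_of_mem _ p.start_mem_support)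
      have h1 : (K.induce s).Adj ⟨u, ha⟩ ⟨v, hv⟩ := h
      exact h1.reachable.trans
        (ih (fun z hz => hsup z (by rw [Walk.support_cons]; exact List.mem_cons_of_mem _ hz)) hv hb)

lemma exists_walk_of_induce_reachable {W : Type*} {K : SimpleGraph W} {s : Set W} {a b : s}
    (h : (K.induce s).Reachable a b) :
    ∃ p : K.Walk a.val b.val, ∀ z ∈ p.support, z ∈ s := by
  obtain ⟨q⟩ := h
  refine ⟨q.map (inclHom K s), ?_⟩
  intro z hz
  erw [Walk.support_map] at hz
  obtain ⟨⟨z', hz'⟩, -, rfl⟩ := List.mem_map.1 hz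
  exact hz'

lemma induce_reachable_mono {W : Type*} {K K' : SimpleGraph W} (h : K ≤ K') {s : Set W} {a b : s}
    (hr : (K.induce s).Reachable a b) : (K'.induce s).Reachable a b :=
  Reachable.mono (fun _ _ hadj => h hadj) hr

/-- Biconnectivity of a pair is monotone under adding edges. -/
lemma BiconnPair.mono {G K : SimpleGraph V} (hGK : G ≤ K) {u v : V}
    (h : BiconnPair G u v) : BiconnPair K u v := by
  obtain ⟨h1, h2, h3⟩ := h
  refine ⟨h1.mono hGK, ?_, ?_⟩
  · intro e he
    by_cases heG : e ∈ G.edgeSet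
    · exact (h2 e heG).mono (by
        intro a b hab
        rw [deleteEdges_adj] at hab ⊢
        exact ⟨hGK hab.1, hab.2⟩)
    · refine (h1.mono ?_)
      intro a b hab
      rw [deleteEdges_adj]
      refine ⟨hGK hab, ?_⟩
      intro hmem
      rw [Set.mem_singleton_iff] at hmem
      exact heG (hmem ▸ G.mem_edgeSet.mpr hab)
  · intro w hu hv
    exact induce_reachable_mono hGK (h3 w hu hv)

lemma BiconnSet.mono {G K : SimpleGraph V} (hGK : G ≤ K) {S : Set V}
    (h : BiconnSet G S) : BiconnSet K S :=
  fun u hu v hv => (h u hu v hv).mono hGK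

lemma BiconnPair.refl (G : SimpleGraph V) (u : V) : BiconnPair G u u :=
  ⟨Reachable.refl _, fun _ _ => Reachable.refl _, fun _ _ _ => Reachable.refl _⟩

lemma BiconnPair.symm {G : SimpleGraph V} {u v : V} (h : BiconnPair G u v) :
    BiconnPair G v u :=
  ⟨h.1.symm, fun e he => (h.2.1 e he).symm, fun w hv hu => (h.2.2 w hu hv).symm⟩

end Aux


section CutVertex

open SimpleGraph Walk Function

lemma nat_card_lt_of_surj_not_inj {α β : Type*} [Finite α] (f : α → β)
    (hs : Function.Surjective f) (hn : ¬ Function.Injective f) :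
    Nat.card β < Nat.card α := by
  by_contra hle
  push_neg at hle
  exact hn (hs.bijective_of_nat_card_le hle).injective

/-- The natural map from components of `G - v` to components of `G`. -/
noncomputable def phiMap (G : SimpleGraph V) (v : V) :
    (G.induce {x | x ≠ v}).ConnectedComponent → G.ConnectedComponent :=
  ConnectedComponent.map (inclHom G {x | x ≠ v})

lemma phiMap_mk (G : SimpleGraph V) (v : V) (a : {x : V | x ≠ v}) :
    phiMap G v ((G.induce {x | x ≠ v}).connectedComponentMk a)
      = G.connectedComponentMk a.val := rfl

lemma isCutVertex_of_sep [Finite V] {G : SimpleGraph V} {v x y : V}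
    (hx : x ≠ v) (hy : y ≠ v) (hxy : G.Reachable x y)
    (hsep : ¬ (G.induce {w | w ≠ v}).Reachable ⟨x, hx⟩ ⟨y, hy⟩) :
    IsCutVertex G v := by
  classical
  obtain ⟨p⟩ := hxy
  have hvp : v ∈ p.support := by
    by_contra hvp
    exact hsep (reachable_induce_of_walk_s5 p (fun z hz => show z ≠ v from fun hzv => hvp (hzv ▸ hz)) hx hy)
  have hrvx : G.Reachable x v := ⟨p.takeUntil v hvp⟩
  have hsurj : Function.Surjective (phiMap G v) := by
    intro c
    obtain ⟨z, rfl⟩ := c.exists_rep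
    by_cases hz : z = v
    · exact ⟨(G.induce {w | w ≠ v}).connectedComponentMk ⟨x, hx⟩,
        ConnectedComponent.sound (hz ▸ hrvx.symm).symm⟩
    · exact ⟨(G.induce {w | w ≠ v}).connectedComponentMk ⟨z, hz⟩, rfl⟩
  have hninj : ¬ Function.Injective (phiMap G v) := by
    intro hinj
    have : (G.induce {w | w ≠ v}).connectedComponentMk ⟨x, hx⟩
        = (G.induce {w | w ≠ v}).connectedComponentMk ⟨y, hy⟩ := by
      apply hinj
      exact ConnectedComponent.sound ⟨p⟩
    exact hsep (ConnectedComponent.exact this)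
  exact nat_card_lt_of_surj_not_inj (phiMap G v) hsurj hninj

lemma reachable_avoid_of_not_cut [Finite V] {G : SimpleGraph V} {v x y : V}
    (hnc : ¬ IsCutVertex G v) (hx : x ≠ v) (hy : y ≠ v) (hxy : G.Reachable x y) :
    (G.induce {w | w ≠ v}).Reachable ⟨x, hx⟩ ⟨y, hy⟩ := by
  by_contra hsep
  exact hnc (isCutVertex_of_sep hx hy hxy hsep)

lemma exists_sep_of_isCutVertex [Finite V] {G : SimpleGraph V} {v : V}
    (h : IsCutVertex G v) :
    ∃ (x y : V) (hx : x ≠ v) (hy : y ≠ v), G.Reachable x y ∧ G.Reachable v x ∧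
      ¬ (G.induce {w | w ≠ v}).Reachable ⟨x, hx⟩ ⟨y, hy⟩ := by
  classical
  have hninj : ¬ Function.Injective (phiMap G v) := by
    intro hinj
    exact absurd (Nat.card_le_card_of_injective _ hinj) (not_le.mpr h)
  rw [Function.not_injective_iff] at hninj
  obtain ⟨c₁, c₂, heq, hne⟩ := hninj
  obtain ⟨⟨x, hx⟩, rfl⟩ := c₁.exists_rep
  obtain ⟨⟨y, hy⟩, rfl⟩ := c₂.exists_rep
  have hxy : G.Reachable x y := ConnectedComponent.exact heq
  have hsep : ¬ (G.induce {w | w ≠ v}).Reachable ⟨x, hx⟩ ⟨y, hy⟩ := by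
    intro hr
    exact hne (ConnectedComponent.sound hr)
  obtain ⟨p⟩ := hxy
  have hvp : v ∈ p.support := by
    by_contra hvp
    exact hsep (reachable_induce_of_walk_s5 p (fun z hz => show z ≠ v from fun hzv => hvp (hzv ▸ hz)) hx hy)
  exact ⟨x, y, hx, hy, ⟨p⟩, ⟨(p.takeUntil v hvp).reverse⟩, hsep⟩

end CutVertex


section Cover

open SimpleGraph Walk

variable {G : SimpleGraph V} {A B : Set V} {L : Set (Sym2 V)}

lemma mem_L_ne (hdisj : Disjoint A B)
    (hLleg : ∀ e ∈ L, ∃ a b : V, e = s(a, b) ∧ LegalEdge G A B a b)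
    {x y : V} (h : s(x, y) ∈ L) : x ≠ y := by
  obtain ⟨a, b, he, ha, hb, -⟩ := hLleg _ h
  have hab : a ≠ b := fun hab => Set.disjoint_left.mp hdisj ha (hab ▸ hb)
  rw [Sym2.eq_iff] at he
  rcases he with ⟨rfl, rfl⟩ | ⟨rfl, rfl⟩
  · exact hab
  · exact hab.symm

lemma sup_L_adj (hdisj : Disjoint A B)
    (hLleg : ∀ e ∈ L, ∃ a b : V, e = s(a, b) ∧ LegalEdge G A B a b)
    {x y : V} : (G ⊔ SimpleGraph.fromEdgeSet L).Adj x y ↔ G.Adj x y ∨ s(x, y) ∈ L := by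
  rw [sup_adj, fromEdgeSet_adj]
  constructor
  · rintro (h | ⟨h, -⟩)
    · exact Or.inl h
    · exact Or.inr h
  · rintro (h | h)
    · exact Or.inl h
    · exact Or.inr ⟨h, mem_L_ne hdisj hLleg h⟩

lemma biconnPair_of_componentwise {K : SimpleGraph V} (hK : ComponentwiseBiconnected K)
    {x y : V} (h : K.Reachable x y) : BiconnPair K x y := by
  have hx : x ∈ (K.connectedComponentMk x).supp := rfl
  have hy : y ∈ (K.connectedComponentMk x).supp := ConnectedComponent.sound h.symm
  exact (hK (K.connectedComponentMk x)).2.1 x hx y hy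

lemma walk_avoid_of_unique_nbr {G : SimpleGraph V} {v w : V} (hN : G.neighborSet v = {w}) :
    ∀ (n : ℕ) {x y : V} (p : G.Walk x y), p.length ≤ n → x ≠ v → y ≠ v →
      ∃ q : G.Walk x y, v ∉ q.support := by
  intro n
  induction n with
  | zero =>
      intro x y p hlen hx _
      cases p with
      | nil => exact ⟨Walk.nil, by simp [hx.symm]⟩
      | cons h p => simp [Walk.length_cons] at hlen
  | succ n ih =>
      intro x y p hlen hx hy
      cases p with
      | nil => exact ⟨Walk.nil, by simp [hx.symm]⟩
      | @cons _ a _ h p =>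
        by_cases ha : a = v
        · subst ha
          cases p with
          | nil => exact absurd rfl hy
          | @cons _ b _ h2 p2 =>
            have hxw : x = w := by
              have : x ∈ G.neighborSet a := h.symm
              rw [hN] at this; exact this
            have hbw : b = w := by
              have : b ∈ G.neighborSet a := h2
              rw [hN] at this; exact this
            have hlen2 : p2.length ≤ n := by
              simp only [Walk.length_cons] at hlen; omega
            exact ih (p2.copy (by rw [hbw, ← hxw]) rfl) (by simpa using hlen2) hx hy
        · obtain ⟨q, hq⟩ := ih p (by simp only [Walk.length_cons] at hlen; omega) ha hy
          refine ⟨Walk.cons h q, ?_⟩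
          rw [Walk.support_cons]
          intro hmem
          rcases List.mem_cons.1 hmem with h' | h'
          · exact hx h'.symm
          · exact hq h'

lemma not_cut_of_degree_one [Finite V] {G : SimpleGraph V} {v : V}
    (h1 : (G.neighborSet v).ncard = 1) : ¬ IsCutVertex G v := by
  intro hcut
  obtain ⟨w, hN⟩ := Set.ncard_eq_one.mp h1
  obtain ⟨x, y, hx, hy, hxy, -, hsep⟩ := exists_sep_of_isCutVertex hcut
  obtain ⟨p⟩ := hxy
  obtain ⟨q, hq⟩ := walk_avoid_of_unique_nbr hN p.length p le_rfl hx hy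
  exact hsep (reachable_induce_of_walk_s5 q
    (fun z hz => show z ≠ v from fun hzv => hq (hzv ▸ hz)) hx hy)

lemma singular_pendant_covered [Finite V]
    (hdisj : Disjoint A B)
    (hLleg : ∀ e ∈ L, ∃ a b : V, e = s(a, b) ∧ LegalEdge G A B a b)
    (hK : ComponentwiseBiconnected (G ⊔ SimpleGraph.fromEdgeSet L))
    {v : V} (h1 : (G.neighborSet v).ncard = 1) : ∃ e ∈ L, v ∈ e := by
  by_contra hno
  push_neg at hno
  set K := G ⊔ SimpleGraph.fromEdgeSet L with hKdef
  obtain ⟨w, hN⟩ := Set.ncard_eq_one.mp h1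
  have hvw : G.Adj v w := by
    have : w ∈ G.neighborSet v := by rw [hN]; rfl
    exact this
  have hKvw : K.Adj v w := le_sup_left (b := SimpleGraph.fromEdgeSet L) hvw
  have hbp : BiconnPair K v w := biconnPair_of_componentwise hK hKvw.reachable
  have he : s(v, w) ∈ K.edgeSet := hKvw
  obtain ⟨p⟩ := hbp.2.1 _ he
  cases p with
  | nil => exact hvw.ne rfl
  | @cons _ z _ h p =>
    rw [deleteEdges_adj] at h
    obtain ⟨hKvz, hnot⟩ := h
    rw [hKdef, sup_L_adj hdisj hLleg] at hKvz
    rcases hKvz with hGvz | hLvz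
    · have : z = w := by
        have : z ∈ G.neighborSet v := hGvz
        rw [hN] at this; exact this
      exact hnot (by rw [this]; rfl)
    · exact hno _ hLvz (Sym2.mem_mk_left v z)

lemma biconnPair_trans_mid [Finite V] {G : SimpleGraph V} {a u v : V}
    (hnc : ¬ IsCutVertex G a) (h1 : BiconnPair G u a) (h2 : BiconnPair G a v) :
    BiconnPair G u v := by
  refine ⟨h1.1.trans h2.1, fun e he => (h1.2.1 e he).trans (h2.2.1 e he), ?_⟩
  intro w hu hv
  by_cases hw : a = w
  · subst hw
    exact reachable_avoid_of_not_cut hnc hu hv (h1.1.trans h2.1)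
  · exact (h1.2.2 w hu hw).trans (h2.2.2 w hw hv)

lemma blocks_eq_of_common_noncut [Finite V] {G : SimpleGraph V} {a : V} {S T : Set V}
    (hnc : ¬ IsCutVertex G a) (hS : IsBlock G S) (hT : IsBlock G T)
    (haS : a ∈ S) (haT : a ∈ T) : S = T := by
  have hbic : BiconnSet G (S ∪ T) := by
    intro u hu v hv
    rcases hu with hu | hu <;> rcases hv with hv | hv
    · exact hS.2.1 u hu v hv
    · exact biconnPair_trans_mid hnc (hS.2.1 u hu a haS) (hT.2.1 a haT v hv)
    · exact biconnPair_trans_mid hnc (hT.2.1 u hu a haT) (hS.2.1 a haS v hv)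
    · exact hT.2.1 u hu v hv
  have h1 : S ∪ T = S := hS.2.2 _ Set.subset_union_left hbic
  have h2 : S ∪ T = T := hT.2.2 _ Set.subset_union_right hbic
  rw [← h1, h2]

end Cover


section Nonsingular

open SimpleGraph Walk

variable {G : SimpleGraph V} {A B : Set V} {L : Set (Sym2 V)}

/-- A `G`-neighbor (other than the cut vertex `c`) of a noncut vertex of a pendant block
lies in the block. -/
lemma pendant_step [Finite V] {P : Set V} {c : V}
    (hP : IsBlock G P) (hcard : 1 < P.ncard) (hcP : c ∈ P)
    (huniq : ∀ z, z ∈ P ∧ IsCutVertex G z → z = c)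
    {y w' : V} (hyP : y ∈ P) (hyc : y ≠ c) (h : G.Adj y w') (hw'c : w' ≠ c) :
    w' ∈ P := by
  by_contra hw'P
  have hyn : ¬ IsCutVertex G y := fun hcut => hyc (huniq y ⟨hyP, hcut⟩)
  set e : Sym2 V := s(y, w') with hedef
  have he : e ∈ G.edgeSet := h
  by_cases hbr : (G.deleteEdges {e}).Reachable y w'
  · -- non-bridge: `insert w' P` is biconnected, contradicting maximality
    have hcross : ∀ p ∈ P, BiconnPair G w' p := by
      intro p hpP
      refine ⟨h.symm.reachable.trans (hP.2.1 y hyP p hpP).1, ?_, ?_⟩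
      · intro e' he'
        by_cases he'e : e' = e
        · subst he'e
          exact hbr.symm.trans ((hP.2.1 y hyP p hpP).2.1 _ he')
        · have hadj : (G.deleteEdges {e'}).Adj w' y := by
            rw [deleteEdges_adj]
            refine ⟨h.symm, ?_⟩
            rw [Set.mem_singleton_iff]
            intro hh
            exact he'e (by rw [← hh, hedef, Sym2.eq_swap])
          exact hadj.reachable.trans ((hP.2.1 y hyP p hpP).2.1 e' he')
      · intro w hw1 hw2
        by_cases hwy : w = y
        · refine reachable_avoid_of_not_cut (v := w) (fun hc => hyn (hwy ▸ hc)) hw1 hw2 ?_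
          exact h.symm.reachable.trans (hP.2.1 y hyP p hpP).1
        · have hyw : y ≠ w := fun hh => hwy hh.symm
          have hadj : (G.induce {z | z ≠ w}).Adj ⟨w', hw1⟩ ⟨y, hyw⟩ := h.symm
          by_cases hpy : p = y
          · subst hpy; exact hadj.reachable
          · exact hadj.reachable.trans ((hP.2.1 y hyP p hpP).2.2 w hyw hw2)
    have hbic : BiconnSet G (insert w' P) := by
      intro u hu v hv
      rcases Set.mem_insert_iff.1 hu with hu' | hu'
      · rcases Set.mem_insert_iff.1 hv with hv' | hv'
        · rw [hu', hv']; exact BiconnPair.refl G _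
        · rw [hu']; exact hcross v hv'
      · rcases Set.mem_insert_iff.1 hv with hv' | hv'
        · rw [hv']; exact (hcross u hu').symm
        · exact hP.2.1 u hu' v hv'
    have heq := hP.2.2 _ (Set.subset_insert w' P) hbic
    exact hw'P (heq ▸ Set.mem_insert w' P)
  · -- bridge: `y` is a cut vertex, contradiction
    obtain ⟨p₀, hp₀P, hp₀y⟩ := Set.exists_ne_of_one_lt_ncard hcard y
    apply hyn
    refine isCutVertex_of_sep (x := w') (y := p₀) (v := y) h.ne' hp₀y
      (h.symm.reachable.trans (hP.2.1 y hyP p₀ hp₀P).1) ?_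
    intro hr
    obtain ⟨q, hq⟩ := exists_walk_of_induce_reachable hr
    have hqe : ∀ ed ∈ q.edges, ed ∉ ({e} : Set (Sym2 V)) := by
      intro ed hed hmem
      rw [Set.mem_singleton_iff] at hmem
      subst hmem
      exact hq y (q.fst_mem_support_of_mem_edges (by rw [← hedef]; exact hed)) rfl
    have h1 : (G.deleteEdges {e}).Reachable w' p₀ := ⟨q.toDeleteEdges _ hqe⟩
    have h2 : (G.deleteEdges {e}).Reachable p₀ y := (hP.2.1 p₀ hp₀P y hyP).2.1 e he
    exact hbr (h2.symm.trans h1.symm)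

lemma nonsingular_pendant_covered [Finite V]
    (hdisj : Disjoint A B)
    (hLleg : ∀ e ∈ L, ∃ a b : V, e = s(a, b) ∧ LegalEdge G A B a b)
    (hK : ComponentwiseBiconnected (G ⊔ SimpleGraph.fromEdgeSet L))
    {P : Set V} (hP : IsBlock G P) (hcard : 1 < P.ncard)
    {c : V} (hcP : c ∈ P) (hccut : IsCutVertex G c)
    (huniq : ∀ z, z ∈ P ∧ IsCutVertex G z → z = c) :
    ∃ e ∈ L, ∃ z, z ∈ e ∧ z ∈ P ∧ ¬ IsCutVertex G z := by
  by_contra hno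
  push_neg at hno
  obtain ⟨x, hxP, hxc⟩ := Set.exists_ne_of_one_lt_ncard hcard c
  set K := G ⊔ SimpleGraph.fromEdgeSet L with hKdef
  obtain ⟨x₀, y₀, hx₀, hy₀, hxy₀, hcx₀, hsep₀⟩ := exists_sep_of_isCutVertex hccut
  have hrxc : G.Reachable x c := (hP.2.1 x hxP c hcP).1
  have hrx₀ : G.Reachable x x₀ := hrxc.trans hcx₀
  have hry₀ : G.Reachable x y₀ := hrx₀.trans hxy₀
  have hpick : ∃ (z : V) (hz : z ≠ c), G.Reachable x z ∧
      ¬ (G.induce {t | t ≠ c}).Reachable ⟨x, hxc⟩ ⟨z, hz⟩ := by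
    by_cases h1 : (G.induce {t | t ≠ c}).Reachable ⟨x, hxc⟩ ⟨x₀, hx₀⟩
    · exact ⟨y₀, hy₀, hry₀, fun h2 => hsep₀ (h1.symm.trans h2)⟩
    · exact ⟨x₀, hx₀, hrx₀, h1⟩
  obtain ⟨z, hzc, hrz, hnr⟩ := hpick
  have hKr : K.Reachable x z := hrz.mono le_sup_left
  have hbp := biconnPair_of_componentwise hK hKr
  obtain ⟨p⟩ := hbp.2.2 c hxc hzc
  have hclosed : ∀ ⦃s t : {t : V | t ≠ c}⦄,
      s ∈ {s : {t : V | t ≠ c} | s.val ∈ P ∧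
        (G.induce {t | t ≠ c}).Reachable ⟨x, hxc⟩ s} →
      (K.induce {t | t ≠ c}).Adj s t →
      t ∈ {s : {t : V | t ≠ c} | s.val ∈ P ∧
        (G.induce {t | t ≠ c}).Reachable ⟨x, hxc⟩ s} := by
    rintro ⟨s, hsc⟩ ⟨t, htc⟩ ⟨hsP, hsr⟩ hadj
    have hKst : K.Adj s t := hadj
    rw [hKdef, sup_L_adj hdisj hLleg] at hKst
    rcases hKst with hGst | hLst
    · have htP : t ∈ P := pendant_step hP hcard hcP huniq hsP hsc hGst htc
      have hadjG : (G.induce {t : V | t ≠ c}).Adj ⟨s, hsc⟩ ⟨t, htc⟩ := hGst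
      exact ⟨htP, hsr.trans hadjG.reachable⟩
    · exact absurd (hno _ hLst s (Sym2.mem_mk_left s t) hsP)
        (fun hcut => hsc (huniq s ⟨hsP, hcut⟩))
  have hfinal := walk_closed hclosed p ⟨hxP, Reachable.refl _⟩
  exact hnr hfinal.2

/-- Every pendant block contains a noncut vertex incident to an edge of the biconnector. -/
lemma pendant_block_covered [Finite V]
    (hdisj : Disjoint A B)
    (hLleg : ∀ e ∈ L, ∃ a b : V, e = s(a, b) ∧ LegalEdge G A B a b)
    (hK : ComponentwiseBiconnected (G ⊔ SimpleGraph.fromEdgeSet L))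
    {P : Set V} (hP : IsPendantBlock G P) :
    ∃ e ∈ L, ∃ z, z ∈ e ∧ z ∈ P ∧ ¬ IsCutVertex G z := by
  obtain ⟨hblk, hcase⟩ := hP
  rcases hcase with ⟨v, rfl, hdeg⟩ | ⟨hcard, c, ⟨hcP, hccut⟩, huniq⟩
  · obtain ⟨e, heL, hve⟩ := singular_pendant_covered hdisj hLleg hK hdeg
    exact ⟨e, heL, v, hve, rfl, not_cut_of_degree_one hdeg⟩
  · exact nonsingular_pendant_covered hdisj hLleg hK hblk hcard hcP hccut
      (fun z hz => huniq z hz)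

end Nonsingular


section Matching

open SimpleGraph

variable {G : SimpleGraph V} {A B : Set V} {L : Set (Sym2 V)}

lemma legalMatching_empty (G : SimpleGraph V) (A B : Set V) (Λ' : Set (Set V)) :
    IsLegalMatching G A B Λ' (∅ : Set (Set V × Set V)) :=
  ⟨fun q hq => absurd hq (Set.notMem_empty q), fun q hq => absurd hq (Set.notMem_empty q)⟩

lemma matchingSet_nonempty (G : SimpleGraph V) (A B : Set V) (Λ' : Set (Set V)) :
    {k | ∃ N, IsLegalMatching G A B Λ' N ∧ N.ncard = k}.Nonempty :=
  ⟨0, ∅, legalMatching_empty G A B Λ', Set.ncard_empty _⟩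

lemma matchingSet_bddAbove [Finite V] (G : SimpleGraph V) (A B : Set V) (Λ' : Set (Set V)) :
    BddAbove {k | ∃ N, IsLegalMatching G A B Λ' N ∧ N.ncard = k} := by
  refine ⟨(Set.univ : Set (Set V × Set V)).ncard, ?_⟩
  rintro k ⟨N, -, rfl⟩
  exact Set.ncard_le_ncard (Set.subset_univ N) (Set.toFinite _)

lemma le_maxMatching [Finite V] {Λ' : Set (Set V)} {N : Set (Set V × Set V)}
    (hN : IsLegalMatching G A B Λ' N) : N.ncard ≤ maxMatching G A B Λ' :=
  le_csSup (matchingSet_bddAbove G A B Λ') ⟨N, hN, rfl⟩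

lemma exists_max_matching [Finite V] (G : SimpleGraph V) (A B : Set V) (Λ' : Set (Set V)) :
    ∃ N, IsLegalMatching G A B Λ' N ∧ N.ncard = maxMatching G A B Λ' :=
  Nat.sSup_mem (matchingSet_nonempty G A B Λ') (matchingSet_bddAbove G A B Λ')

lemma two_mul_matching_le [Finite V] {Λ' : Set (Set V)} {N : Set (Set V × Set V)}
    (hN : IsLegalMatching G A B Λ' N) : 2 * N.ncard ≤ Λ'.ncard := by
  classical
  have hF : Function.Injective (fun qb : ↑N × Bool =>
      (⟨if qb.2 then qb.1.1.1 else qb.1.1.2, by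
        rcases qb with ⟨⟨q, hq⟩, b⟩
        obtain ⟨h1, h2, -⟩ := hN.1 q hq
        cases b <;> simpa⟩ : ↑Λ')) := by
    rintro ⟨⟨q, hq⟩, b⟩ ⟨⟨q', hq'⟩, b'⟩ heq
    have heq' : (if b then q.1 else q.2) = (if b' then q'.1 else q'.2) := by
      simpa using congrArg Subtype.val heq
    by_cases hqq : q = q'
    · subst hqq
      rcases eq_or_ne b b' with hb | hb
      · exact Prod.ext (Subtype.ext rfl) hb
      · exfalso
        have hne12 := (hN.1 q hq).2.2.2.2.1
        cases b <;> cases b'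
        · exact hb rfl
        · exact hne12 (by simpa using heq'.symm)
        · exact hne12 (by simpa using heq')
        · exact hb rfl
    · exfalso
      have hdisj := hN.2 q hq q' hq' hqq
      have hmem : (if b then q.1 else q.2) ∈ ({q.1, q.2} ∩ {q'.1, q'.2} : Set (Set V)) := by
        constructor
        · cases b <;> simp
        · rw [heq']; cases b' <;> simp
      rw [hdisj] at hmem
      exact hmem
  have hcard := Nat.card_le_card_of_injective _ hF
  rw [Nat.card_prod, Nat.card_coe_set_eq, Nat.card_coe_set_eq] at hcard
  have hbool : Nat.card Bool = 2 := by simp [Nat.card_eq_fintype_card]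
  rw [hbool, mul_comm] at hcard
  exact hcard

lemma cover_count [Finite V]
    (hdisj : Disjoint A B)
    (hLleg : ∀ e ∈ L, ∃ a b : V, e = s(a, b) ∧ LegalEdge G A B a b)
    (hK : ComponentwiseBiconnected (G ⊔ SimpleGraph.fromEdgeSet L)) :
    ∃ N, IsLegalMatching G A B (pendantBlocks G) N ∧
      (pendantBlocks G).ncard ≤ L.ncard + N.ncard := by
  classical
  have hcov : ∀ P : ↑(pendantBlocks G), ∃ e, e ∈ L ∧ ∃ z, z ∈ e ∧ z ∈ P.1 ∧
      ¬ IsCutVertex G z := by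
    intro P
    obtain ⟨e, he, z, hz⟩ := pendant_block_covered hdisj hLleg hK P.2
    exact ⟨e, he, z, hz⟩
  choose f hfL zf hz1 hz2 hz3 using hcov
  have hdec : ∀ P : ↑(pendantBlocks G), ∃ a b : V, f P = s(a, b) ∧ a ∈ A ∧ b ∈ B := by
    intro P
    obtain ⟨a, b, he, ha, hb, -⟩ := hLleg _ (hfL P)
    exact ⟨a, b, he, ha, hb⟩
  choose av bv hPe hPa hPb using hdec
  have hbvA : ∀ P, bv P ∉ A := fun P hb => Set.disjoint_left.mp hdisj hb (hPb P)
  have hzinj : Function.Injective zf := by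
    intro P Q h
    exact Subtype.ext (blocks_eq_of_common_noncut (hz3 P) P.2.1 Q.2.1 (hz2 P) (h ▸ hz2 Q))
  have hzmem : ∀ P, zf P = av P ∨ zf P = bv P := by
    intro P
    have := hz1 P
    rw [hPe P, Sym2.mem_iff] at this
    exact this
  have hzA : ∀ P, zf P ∈ A → zf P = av P := by
    intro P hA
    rcases hzmem P with h | h
    · exact h
    · exact absurd hA (h ▸ hbvA P)
  have hzB : ∀ P, zf P ∉ A → zf P = bv P := by
    intro P hA
    rcases hzmem P with h | h
    · exact absurd (h ▸ hPa P) hA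
    · exact h
  -- membership of the other block's vertex in a shared edge
  have hzmem' : ∀ P Q, f P = f Q → zf Q = av P ∨ zf Q = bv P := by
    intro P Q hfe
    have := hz1 Q
    rw [← hfe, hPe P, Sym2.mem_iff] at this
    exact this
  have K2 : ∀ P Q, f P = f Q → zf P ∈ A → zf Q ∈ A → P = Q := by
    intro P Q hfe hA hA'
    apply hzinj
    rw [hzA P hA]
    rcases hzmem' P Q hfe with h | h
    · exact h.symm
    · exact absurd hA' (h ▸ hbvA P)
  have K2' : ∀ P Q, f P = f Q → zf P ∉ A → zf Q ∉ A → P = Q := by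
    intro P Q hfe hA hA'
    apply hzinj
    rw [hzB P hA]
    rcases hzmem' P Q hfe with h | h
    · exact absurd (h ▸ hPa P) hA'
    · exact h.symm
  -- the matching
  set N : Set (Set V × Set V) :=
    {q | ∃ P Q : ↑(pendantBlocks G), q = (P.1, Q.1) ∧ P ≠ Q ∧ f P = f Q ∧
      zf P ∈ A ∧ zf Q ∉ A} with hNdef
  have hNmatch : IsLegalMatching G A B (pendantBlocks G) N := by
    constructor
    · rintro q ⟨P, Q, rfl, hne, hfe, hA, hA'⟩
      refine ⟨P.2, Q.2, P.2, Q.2, fun h => hne (Subtype.ext h), ?_, ?_⟩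
      · rintro ⟨-, hTA⟩
        exact hA' (hTA (zf Q) (hz2 Q) (hz3 Q))
      · rintro ⟨hTB, -⟩
        exact Set.disjoint_left.mp hdisj hA (hTB (zf P) (hz2 P) (hz3 P))
    · rintro q ⟨P, Q, rfl, hne, hfe, hA, hA'⟩ q' ⟨P', Q', rfl, hne', hfe', hA2, hA2'⟩ hqq
      rw [Set.eq_empty_iff_forall_notMem]
      rintro X ⟨hX1, hX2⟩
      simp only [Set.mem_insert_iff, Set.mem_singleton_iff] at hX1 hX2
      rcases hX1 with hX1 | hX1 <;> rcases hX2 with hX2 | hX2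
      · have hPP : P = P' := Subtype.ext (hX1.symm.trans hX2)
        subst hPP
        have hQQ : Q = Q' := K2' Q Q' ((hfe.symm.trans hfe')) hA' hA2'
        exact hqq (by rw [hQQ])
      · have hPQ : P = Q' := Subtype.ext (hX1.symm.trans hX2)
        exact hA2' (hPQ ▸ hA)
      · have hQP : Q = P' := Subtype.ext (hX1.symm.trans hX2)
        exact hA' (hQP.symm ▸ hA2)
      · have hQQ : Q = Q' := Subtype.ext (hX1.symm.trans hX2)
        subst hQQ
        have hPP : P = P' := K2 P P' (hfe.trans hfe'.symm) hA hA2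
        exact hqq (by rw [hPP])
  refine ⟨N, hNmatch, ?_⟩
  -- partition the pendant blocks and count
  set Lam := (Set.univ : Set ↑(pendantBlocks G)) with hLam
  set s₂ : Set ↑(pendantBlocks G) :=
    {P | zf P ∉ A ∧ ∃ Q : ↑(pendantBlocks G), Q ≠ P ∧ f Q = f P} with hs₂
  have hpartner : ∀ P ∈ s₂, ∃ Q : ↑(pendantBlocks G), Q ≠ P ∧ f Q = f P ∧ zf Q ∈ A := by
    intro P hP
    obtain ⟨hPA, Q, hQne, hQf⟩ := hP
    refine ⟨Q, hQne, hQf, ?_⟩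
    by_contra hQA
    exact hQne (K2' Q P hQf hQA hPA)
  choose pt hpt1 hpt2 hpt3 using hpartner
  have hcount1 : s₂ᶜ.ncard ≤ L.ncard := by
    apply Set.ncard_le_ncard_of_injOn (fun P => f P) (fun P _ => hfL P) ?_ (Set.toFinite L)
    intro P hP P' hP' hff
    by_contra hne
    have hshP : P ∈ s₂ ∨ zf P ∈ A := by
      by_cases hz : zf P ∈ A
      · exact Or.inr hz
      · exact Or.inl ⟨hz, P', fun h => hne h.symm, hff.symm⟩
    have hshP' : P' ∈ s₂ ∨ zf P' ∈ A := by
      by_cases hz : zf P' ∈ A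
      · exact Or.inr hz
      · exact Or.inl ⟨hz, P, hne, hff⟩
    rcases hshP with h | hzP
    · exact hP h
    rcases hshP' with h | hzP'
    · exact hP' h
    exact hne (K2 P P' hff hzP hzP')
  have hcount2 : s₂.ncard ≤ N.ncard := by
    apply Set.ncard_le_ncard_of_injOn
      (fun P => if h : P ∈ s₂ then ((pt P h).1, P.1) else (P.1, P.1)) ?_ ?_ (Set.toFinite N)
    · intro P hP
      simp only [dif_pos hP]
      exact ⟨pt P hP, P, rfl, hpt1 P hP, hpt2 P hP, hpt3 P hP, hP.1⟩
    · intro P hP P' hP' hff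
      simp only [dif_pos hP, dif_pos hP'] at hff
      exact Subtype.ext (congrArg Prod.snd hff)
  have hsplit : s₂.ncard + s₂ᶜ.ncard = (pendantBlocks G).ncard := by
    rw [Set.ncard_add_ncard_compl s₂ (Set.toFinite _) (Set.toFinite _),
      ← Nat.card_coe_set_eq]
  omega

end Matching


section PartTwo

open SimpleGraph

variable {G : SimpleGraph V} {A B : Set V} {L : Set (Sym2 V)}

lemma part_two [Finite V]
    (hdisj : Disjoint A B)
    (hLleg : ∀ e ∈ L, ∃ a b : V, e = s(a, b) ∧ LegalEdge G A B a b)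
    (hK : ComponentwiseBiconnected (G ⊔ SimpleGraph.fromEdgeSet L)) :
    maxMatching G A B (pendantBlocks G) + Rnum G A B (pendantBlocks G) ≤ L.ncard := by
  obtain ⟨N, hN, hNle⟩ := cover_count hdisj hLleg hK
  have h1 : N.ncard ≤ maxMatching G A B (pendantBlocks G) := le_maxMatching hN
  obtain ⟨N', hN', hN'card⟩ := exists_max_matching G A B (pendantBlocks G)
  have h2 : 2 * maxMatching G A B (pendantBlocks G) ≤ (pendantBlocks G).ncard := by
    rw [← hN'card]; exact two_mul_matching_le hN'
  unfold Rnum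
  omega

end PartTwo


section ConnCount

open Relation

/-- A set of vertices pairwise connected by paths through a finite edge set `F`
has at most `F.ncard + 1` elements. -/
lemma conn_count {α : Type*} [Finite α] :
    ∀ (n : ℕ) (F : Set (α × α)) (S : Set α), F.ncard ≤ n →
      (∀ a ∈ S, ∀ b ∈ S, Relation.ReflTransGen (fun x y => (x, y) ∈ F ∨ (y, x) ∈ F) a b) →
      S.ncard ≤ F.ncard + 1 := by
  intro n
  induction n with
  | zero =>
      intro F S hF hconn
      have hF0 : F = ∅ := (Set.ncard_eq_zero (Set.toFinite F)).mp (Nat.le_zero.mp hF)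
      subst hF0
      rcases S.eq_empty_or_nonempty with rfl | ⟨a, ha⟩
      · simp
      · have hsub : S ⊆ {a} := by
          intro z hz
          have h := hconn z hz a ha
          induction h with
          | refl => rfl
          | tail _ st _ => exact absurd st (by simp)
        exact (Set.ncard_le_ncard hsub (Set.finite_singleton a)).trans (by simp)
  | succ n IH =>
      intro F S hF hconn
      by_cases hFn : F.ncard ≤ n
      · exact IH F S hFn hconn
      · have hne : F.Nonempty := Set.nonempty_of_ncard_ne_zero (by omega)
        obtain ⟨e, heF⟩ := hne
        obtain ⟨a, b⟩ := e
        set F' := F \ {(a, b)} with hF'def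
        have hF' : F'.ncard = F.ncard - 1 := Set.ncard_diff_singleton_of_mem heF
        have hF'n : F'.ncard ≤ n := by omega
        set T : α → α → Prop :=
          Relation.ReflTransGen (fun x y => (x, y) ∈ F' ∨ (y, x) ∈ F') with hTdef
        have hTsymm : Symmetric T :=
          fun x y h => (@Relation.ReflTransGen.symmetric _ _ ⟨fun x y h => h.symm⟩).symm x y h
        have hdecomp : ∀ x y, Relation.ReflTransGen
            (fun x y => (x, y) ∈ F ∨ (y, x) ∈ F) x y →
            T x y ∨ (T x a ∧ T b y) ∨ (T x b ∧ T a y) := by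
          intro x y hxy
          induction hxy with
          | refl => exact Or.inl Relation.ReflTransGen.refl
          | @tail c y hxc hcy ihc =>
              have hstep : ((c, y) = (a, b) ∨ (y, c) = (a, b)) ∨
                  ((c, y) ∈ F' ∨ (y, c) ∈ F') := by
                rcases hcy with h | h
                · by_cases hce : (c, y) = (a, b)
                  · exact Or.inl (Or.inl hce)
                  · exact Or.inr (Or.inl ⟨h, hce⟩)
                · by_cases hce : (y, c) = (a, b)
                  · exact Or.inl (Or.inr hce)
                  · exact Or.inr (Or.inr ⟨h, hce⟩)
              rcases hstep with (hcye | hcye) | hstep'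
              · have hca : c = a := congrArg Prod.fst hcye
                have hyb : y = b := congrArg Prod.snd hcye
                subst hca; subst hyb
                rcases ihc with h | ⟨h1, h2⟩ | ⟨h1, h2⟩
                · exact Or.inr (Or.inl ⟨h, Relation.ReflTransGen.refl⟩)
                · exact Or.inr (Or.inl ⟨h1, Relation.ReflTransGen.refl⟩)
                · exact Or.inl h1
              · have hyb : y = a := congrArg Prod.fst hcye
                have hca : c = b := congrArg Prod.snd hcye
                subst hca; subst hyb
                rcases ihc with h | ⟨h1, h2⟩ | ⟨h1, h2⟩
                · exact Or.inr (Or.inr ⟨h, Relation.ReflTransGen.refl⟩)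
                · exact Or.inl h1
                · exact Or.inr (Or.inr ⟨h1, Relation.ReflTransGen.refl⟩)
              · have hTcy : T c y := Relation.ReflTransGen.single hstep'
                rcases ihc with h | ⟨h1, h2⟩ | ⟨h1, h2⟩
                · exact Or.inl (h.trans hTcy)
                · exact Or.inr (Or.inl ⟨h1, h2.trans hTcy⟩)
                · exact Or.inr (Or.inr ⟨h1, h2.trans hTcy⟩)
        by_cases hall : ∀ x ∈ S, ∀ y ∈ S, T x y
        · have h1 := IH F' S hF'n hall
          have h2 := Set.ncard_le_ncard (Set.diff_subset (s := F) (t := {(a,b)}))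
            (Set.toFinite F)
          omega
        · push_neg at hall
          obtain ⟨s₀, hs₀, s₁, hs₁, hns⟩ := hall
          have hTab : ¬ T a b := by
            intro hT
            rcases hdecomp s₀ s₁ (hconn s₀ hs₀ s₁ hs₁) with h | ⟨h1, h2⟩ | ⟨h1, h2⟩
            · exact hns h
            · exact hns ((h1.trans hT).trans h2)
            · exact hns ((h1.trans (hTsymm hT)).trans h2)
          have hrestr : ∀ (t v : α), T v t → ∀ {y : α}, T v y →
              Relation.ReflTransGen
                (fun x y => (x, y) ∈ {p ∈ F' | T p.1 t ∧ T p.2 t} ∨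
                  (y, x) ∈ {p ∈ F' | T p.1 t ∧ T p.2 t}) v y := by
            intro t v hvt y hvy
            induction hvy with
            | refl => exact Relation.ReflTransGen.refl
            | @tail c y hvc hcy ih =>
                have hTca : T c a ∨ True := Or.inr trivial
                have hTct : T c t := (hTsymm hvc).trans hvt
                have hTyt : T y t := (hTsymm (Relation.ReflTransGen.single hcy)).trans hTct
                refine ih.tail ?_
                rcases hcy with h | h
                · exact Or.inl ⟨h, hTct, hTyt⟩
                · exact Or.inr ⟨h, hTyt, hTct⟩
          set Sa := {x ∈ S | T x a} with hSa
          set Sb := {x ∈ S | T x b} with hSb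
          set Fa := {p ∈ F' | T p.1 a ∧ T p.2 a} with hFa
          set Fb := {p ∈ F' | T p.1 b ∧ T p.2 b} with hFb
          have hScover : S ⊆ Sa ∪ Sb := by
            intro x hx
            rcases hdecomp x s₀ (hconn x hx s₀ hs₀) with h | ⟨h1, h2⟩ | ⟨h1, h2⟩
            · rcases hdecomp x s₁ (hconn x hx s₁ hs₁) with h' | ⟨h1', h2'⟩ | ⟨h1', h2'⟩
              · exact absurd ((hTsymm h).trans h') hns
              · exact Or.inl ⟨hx, h1'⟩
              · exact Or.inr ⟨hx, h1'⟩
            · exact Or.inl ⟨hx, h1⟩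
            · exact Or.inr ⟨hx, h1⟩
          have hFasub : Fa ⊆ F' := Set.sep_subset _ _
          have hFbsub : Fb ⊆ F' := Set.sep_subset _ _
          have hSacount : Sa.ncard ≤ Fa.ncard + 1 := by
            refine IH Fa Sa ((Set.ncard_le_ncard hFasub (Set.toFinite _)).trans hF'n) ?_
            intro x hx y hy
            exact hrestr a x hx.2 (hx.2.trans (hTsymm hy.2))
          have hSbcount : Sb.ncard ≤ Fb.ncard + 1 := by
            refine IH Fb Sb ((Set.ncard_le_ncard hFbsub (Set.toFinite _)).trans hF'n) ?_
            intro x hx y hy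
            exact hrestr b x hx.2 (hx.2.trans (hTsymm hy.2))
          have hdisjab : Disjoint Fa Fb := by
            rw [Set.disjoint_left]
            rintro p ⟨hp, h1, -⟩ ⟨-, h1', -⟩
            exact hTab ((hTsymm h1).trans h1')
          have hunion : Fa.ncard + Fb.ncard ≤ F'.ncard := by
            rw [← Set.ncard_union_eq hdisjab (Set.toFinite _) (Set.toFinite _)]
            exact Set.ncard_le_ncard (Set.union_subset hFasub hFbsub) (Set.toFinite _)
          have hstotal : S.ncard ≤ Sa.ncard + Sb.ncard :=
            (Set.ncard_le_ncard hScover (Set.toFinite _)).trans (Set.ncard_union_le _ _)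
          omega

end ConnCount


section PartOneLemmas

open SimpleGraph Walk

variable {G : SimpleGraph V} {A B : Set V} {L : Set (Sym2 V)}

lemma walk_transfer {W : Type*} {K' G' : SimpleGraph W} {S : Set W}
    (h : ∀ ⦃a b : W⦄, a ∈ S → K'.Adj a b → G'.Adj a b ∧ b ∈ S) :
    ∀ {a b : W}, K'.Walk a b → a ∈ S → G'.Reachable a b
  | _, _, Walk.nil, _ => Reachable.refl _
  | _, _, Walk.cons hadj p, ha =>
      ((h ha hadj).1.reachable).trans (walk_transfer h p (h ha hadj).2)

lemma exists_crossing_edge [Finite V]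
    (hdisj : Disjoint A B)
    (hLleg : ∀ e ∈ L, ∃ a b : V, e = s(a, b) ∧ LegalEdge G A B a b)
    {E : Set (Sym2 V)} :
    ∀ {x y : V}, ((G ⊔ SimpleGraph.fromEdgeSet L).deleteEdges E).Walk x y →
    G.connectedComponentMk y ≠ G.connectedComponentMk x →
    ∃ a b : V, s(a, b) ∈ L ∧ s(a, b) ∉ E ∧
      G.connectedComponentMk a = G.connectedComponentMk x ∧
      G.connectedComponentMk b ≠ G.connectedComponentMk x := by
  intro x y p
  induction p with
  | nil => intro hy; exact absurd rfl hy
  | @cons x c y h p ih =>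
      intro hy
      rw [deleteEdges_adj] at h
      obtain ⟨hK, hE⟩ := h
      by_cases hc : G.connectedComponentMk c = G.connectedComponentMk x
      · have hy' : G.connectedComponentMk y ≠ G.connectedComponentMk c := by
          rw [hc]; exact hy
        obtain ⟨a, b, haL, haE, ha, hb⟩ := ih hy'
        exact ⟨a, b, haL, haE, by rw [ha, hc], by rw [hc] at hb; exact hb⟩
      · rw [sup_L_adj hdisj hLleg] at hK
        rcases hK with hG | hL
        · exact absurd (ConnectedComponent.sound hG.symm.reachable) hc
        · exact ⟨x, c, hL, hE, rfl, hc⟩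

lemma merged_two_incident [Finite V]
    (hdisj : Disjoint A B)
    (hLleg : ∀ e ∈ L, ∃ a b : V, e = s(a, b) ∧ LegalEdge G A B a b)
    (hK : ComponentwiseBiconnected (G ⊔ SimpleGraph.fromEdgeSet L))
    {x y : V}
    (hKxy : (G ⊔ SimpleGraph.fromEdgeSet L).Reachable x y)
    (hGxy : G.connectedComponentMk y ≠ G.connectedComponentMk x) :
    ∃ e₁ e₂ : Sym2 V, e₁ ∈ L ∧ e₂ ∈ L ∧ e₁ ≠ e₂ ∧
      (∃ a b, e₁ = s(a, b) ∧ G.connectedComponentMk a = G.connectedComponentMk x ∧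
        G.connectedComponentMk b ≠ G.connectedComponentMk x) ∧
      (∃ a b, e₂ = s(a, b) ∧ G.connectedComponentMk a = G.connectedComponentMk x ∧
        G.connectedComponentMk b ≠ G.connectedComponentMk x) := by
  have hbp := biconnPair_of_componentwise hK hKxy
  obtain ⟨p⟩ := hKxy
  have p0 : ((G ⊔ SimpleGraph.fromEdgeSet L).deleteEdges (∅ : Set (Sym2 V))).Walk x y :=
    p.toDeleteEdges _ (by simp)
  obtain ⟨a₁, b₁, h₁L, -, h₁a, h₁b⟩ := exists_crossing_edge hdisj hLleg p0 hGxy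
  have he₁K : s(a₁, b₁) ∈ (G ⊔ SimpleGraph.fromEdgeSet L).edgeSet := by
    rw [SimpleGraph.mem_edgeSet, sup_L_adj hdisj hLleg]
    exact Or.inr h₁L
  obtain ⟨q⟩ := hbp.2.1 _ he₁K
  obtain ⟨a₂, b₂, h₂L, h₂E, h₂a, h₂b⟩ := exists_crossing_edge hdisj hLleg q hGxy
  refine ⟨s(a₁, b₁), s(a₂, b₂), h₁L, h₂L, ?_,
    ⟨a₁, b₁, rfl, h₁a, h₁b⟩, ⟨a₂, b₂, rfl, h₂a, h₂b⟩⟩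
  intro hee
  exact h₂E (by rw [Set.mem_singleton_iff, ← hee])

lemma unmerged_comp_block [Finite V]
    (hdisj : Disjoint A B)
    (hLleg : ∀ e ∈ L, ∃ a b : V, e = s(a, b) ∧ LegalEdge G A B a b)
    (hK : ComponentwiseBiconnected (G ⊔ SimpleGraph.fromEdgeSet L))
    {x : V}
    (hnotouch : ∀ e ∈ L, ∀ z ∈ e, G.connectedComponentMk z ≠ G.connectedComponentMk x) :
    IsBlock G (G.connectedComponentMk x).supp := by
  set K := G ⊔ SimpleGraph.fromEdgeSet L with hKdef
  set Y := (G.connectedComponentMk x).supp with hYdef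
  have hmemY : ∀ z, z ∈ Y ↔ G.connectedComponentMk z = G.connectedComponentMk x := by
    intro z; exact Iff.rfl
  have hedge : ∀ ⦃z w : V⦄, z ∈ Y → K.Adj z w → G.Adj z w ∧ w ∈ Y := by
    intro z w hz hadj
    rw [hKdef, sup_L_adj hdisj hLleg] at hadj
    rcases hadj with hG | hL
    · refine ⟨hG, ?_⟩
      rw [hmemY] at hz ⊢
      rw [ConnectedComponent.sound hG.symm.reachable, hz]
    · exact absurd ((hmemY z).1 hz) (hnotouch _ hL z (Sym2.mem_mk_left _ _))
  have hYK : ∀ z ∈ Y, ∀ w, K.Reachable z w → w ∈ Y := by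
    intro z hz w hr
    obtain ⟨p⟩ := hr
    exact walk_closed (fun a b ha h => (hedge ha h).2) p hz
  have hxY : x ∈ Y := rfl
  -- transfer of biconnectivity from K down to G on Y
  have htrans : ∀ z ∈ Y, ∀ w ∈ Y, BiconnPair K z w → BiconnPair G z w := by
    intro z hz w hw hbp
    obtain ⟨h1, h2, h3⟩ := hbp
    refine ⟨?_, ?_, ?_⟩
    · obtain ⟨p⟩ := h1
      exact walk_transfer hedge p hz
    · intro e' he'
      have he'K : e' ∈ K.edgeSet :=
        (edgeSet_subset_edgeSet.mpr le_sup_left) he'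
      obtain ⟨p⟩ := h2 e' he'K
      refine walk_transfer (K' := K.deleteEdges {e'}) (G' := G.deleteEdges {e'})
        (S := Y) ?_ p hz
      intro a b ha hadj
      rw [deleteEdges_adj] at hadj ⊢
      exact ⟨⟨(hedge ha hadj.1).1, hadj.2⟩, (hedge ha hadj.1).2⟩
    · intro w' hzw' hww'
      obtain ⟨p⟩ := h3 w' hzw' hww'
      refine walk_transfer (K' := K.induce {t | t ≠ w'}) (G' := G.induce {t | t ≠ w'})
        (S := {t : {t : V | t ≠ w'} | t.val ∈ Y}) ?_ p hz
      rintro ⟨a, ha'⟩ ⟨b, hb'⟩ ha hadj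
      have h := hedge ha hadj
      exact ⟨h.1, h.2⟩
  refine ⟨⟨x, hxY⟩, ?_, ?_⟩
  · intro z hz w hw
    have hKzw : K.Reachable z w := by
      have h1 : G.Reachable z x := ConnectedComponent.exact ((hmemY z).1 hz)
      have h2 : G.Reachable x w := (ConnectedComponent.exact ((hmemY w).1 hw)).symm
      exact (h1.trans h2).mono le_sup_left
    exact htrans z hz w hw (biconnPair_of_componentwise hK hKzw)
  · intro T hYT hT
    have hTK : BiconnSet K T := hT.mono le_sup_left
    have hsuppK : (K.connectedComponentMk x).supp = Y := by
      ext z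
      constructor
      · intro hzz
        have : K.Reachable x z := (ConnectedComponent.exact hzz).symm
        exact hYK x hxY z this
      · intro hz
        have : G.Reachable z x := ConnectedComponent.exact ((hmemY z).1 hz)
        exact ConnectedComponent.sound (this.mono le_sup_left)
    have := (hK (K.connectedComponentMk x)).2.2 T (by rw [hsuppK]; exact hYT) hTK
    rw [this, hsuppK]

lemma unmerged_nonblock_inner [Finite V]
    (hdisj : Disjoint A B)
    (hLleg : ∀ e ∈ L, ∃ a b : V, e = s(a, b) ∧ LegalEdge G A B a b)
    (hK : ComponentwiseBiconnected (G ⊔ SimpleGraph.fromEdgeSet L))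
    {x : V}
    (hnb : ¬ IsBlock G (G.connectedComponentMk x).supp)
    (hunm : ∀ z w : V, G.connectedComponentMk z = G.connectedComponentMk x →
      (G ⊔ SimpleGraph.fromEdgeSet L).Reachable z w →
      G.connectedComponentMk w = G.connectedComponentMk x) :
    ∃ e ∈ L, ∀ z ∈ e, G.connectedComponentMk z = G.connectedComponentMk x := by
  by_cases htouch : ∃ e ∈ L, ∃ z ∈ e,
      G.connectedComponentMk z = G.connectedComponentMk x
  · obtain ⟨e, heL, z, hze, hz⟩ := htouch
    refine ⟨e, heL, ?_⟩
    obtain ⟨a, b, rfl, -⟩ := hLleg e heL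
    have hKab : (G ⊔ SimpleGraph.fromEdgeSet L).Adj a b := by
      rw [sup_L_adj hdisj hLleg]; exact Or.inr heL
    rw [Sym2.mem_iff] at hze
    have hab : G.connectedComponentMk a = G.connectedComponentMk x ∧
        G.connectedComponentMk b = G.connectedComponentMk x := by
      rcases hze with rfl | rfl
      · exact ⟨hz, hunm _ _ hz hKab.reachable⟩
      · exact ⟨hunm _ _ hz hKab.symm.reachable, hz⟩
    intro w hw
    rw [Sym2.mem_iff] at hw
    rcases hw with rfl | rfl
    · exact hab.1
    · exact hab.2
  · push_neg at htouch
    exact absurd (unmerged_comp_block hdisj hLleg hK htouch) hnb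

/-- Double counting: if every element of `S` is incident to at least two elements of `T`,
and every element of `T` is incident to at most two elements of `S`, then `|S| ≤ |T|`. -/
lemma two_incidence_count {β γ : Type*} [Finite β] [Finite γ] (R : β → γ → Prop)
    (S : Set β) (T : Set γ)
    (hrow : ∀ b ∈ S, ∃ c₁ c₂, c₁ ∈ T ∧ c₂ ∈ T ∧ c₁ ≠ c₂ ∧ R b c₁ ∧ R b c₂)
    (hcol : ∀ c, ∀ b₁ ∈ S, ∀ b₂ ∈ S, ∀ b₃ ∈ S, R b₁ c → R b₂ c → R b₃ c →
      b₁ = b₂ ∨ b₁ = b₃ ∨ b₂ = b₃) :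
    S.ncard ≤ T.ncard := by
  classical
  rcases S.eq_empty_or_nonempty with rfl | ⟨b₀, hb₀⟩
  · simp
  haveI : Nonempty β := ⟨b₀⟩
  set I : Set (β × γ) := {p | p.1 ∈ S ∧ p.2 ∈ T ∧ R p.1 p.2} with hIdef
  choose c₁ c₂ hc₁T hc₂T hcne hRc₁ hRc₂ using hrow
  -- lower bound: 2|S| ≤ |I|
  have hinj1 : Function.Injective (fun p : ↑S × Bool =>
      (⟨(p.1.1, if p.2 then c₁ p.1.1 p.1.2 else c₂ p.1.1 p.1.2), by
        rcases p with ⟨⟨b, hb⟩, bb⟩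
        cases bb
        · exact ⟨hb, hc₂T b hb, hRc₂ b hb⟩
        · exact ⟨hb, hc₁T b hb, hRc₁ b hb⟩⟩ : ↑I)) := by
    rintro ⟨⟨b, hb⟩, bb⟩ ⟨⟨b', hb'⟩, bb'⟩ heq
    have h1 : b = b' := by
      have := congrArg (fun q : ↑I => q.1.1) heq
      simpa using this
    subst h1
    have h2 : (if bb then c₁ b hb else c₂ b hb) = (if bb' then c₁ b hb' else c₂ b hb') := by
      have := congrArg (fun q : ↑I => q.1.2) heq
      simpa using this
    have hirrel : c₁ b hb = c₁ b hb' ∧ c₂ b hb = c₂ b hb' := by constructor <;> rfl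
    cases bb <;> cases bb'
    · rfl
    · exact absurd (by simpa using h2.symm) (hcne b hb)
    · exact absurd (by simpa using h2) (hcne b hb)
    · rfl
  -- upper bound: |I| ≤ 2|T|
  set r : γ → β := fun c => if h : ∃ b ∈ S, R b c then h.choose else b₀ with hrdef
  have hr : ∀ c, (∃ b ∈ S, R b c) → r c ∈ S ∧ R (r c) c := by
    intro c h
    rw [hrdef]
    simp only [dif_pos h]
    exact ⟨h.choose_spec.1, h.choose_spec.2⟩
  have hinj2 : Function.Injective (fun p : ↑I =>
      ((⟨p.1.2, p.2.2.1⟩ : ↑T), decide (p.1.1 = r p.1.2))) := by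
    rintro ⟨⟨b, c⟩, hb, hc, hR⟩ ⟨⟨b', c'⟩, hb', hc', hR'⟩ heq
    simp only [Prod.mk.injEq, Subtype.mk.injEq, decide_eq_decide] at heq
    obtain ⟨hcc, hbb⟩ := heq
    subst hcc
    apply Subtype.ext
    simp only [Prod.mk.injEq]
    refine ⟨?_, trivial⟩
    have hrc := hr c ⟨b, hb, hR⟩
    by_cases hb1 : b = r c
    · rw [hb1, ← hbb.mp hb1]
    · have hb2 : b' ≠ r c := fun h => hb1 (hbb.mpr h)
      rcases hcol c b hb b' hb' (r c) hrc.1 hR hR' hrc.2 with h | h | h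
      · exact h
      · exact absurd h hb1
      · exact absurd h hb2
  have h1 := Nat.card_le_card_of_injective _ hinj1
  have h2 := Nat.card_le_card_of_injective _ hinj2
  have hbool : Nat.card Bool = 2 := by simp [Nat.card_eq_fintype_card]
  simp only [Nat.card_prod, Nat.card_coe_set_eq, hbool] at h1 h2
  omega

end PartOneLemmas


section PartOneMain

open SimpleGraph Walk

instance optionFinite {α : Type*} [Finite α] : Finite (Option α) := by
  haveI := Fintype.ofFinite α
  infer_instance

variable {G : SimpleGraph V} {A B : Set V} {L : Set (Sym2 V)}

lemma part_one [Finite V]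
    (hdisj : Disjoint A B)
    (hLleg : ∀ e ∈ L, ∃ a b : V, e = s(a, b) ∧ LegalEdge G A B a b)
    (hK : ComponentwiseBiconnected (G ⊔ SimpleGraph.fromEdgeSet L))
    (u : V) :
    Dnum G u + Cnum G ≤ L.ncard + 2 := by
  classical
  set K := G ⊔ SimpleGraph.fromEdgeSet L with hKdef
  set Su : Set V := {v | G.Reachable u v ∧ v ≠ u} with hSudef
  -- canonical endpoints of the edges of L
  have hLdec : ∀ e : ↑L, ∃ a b : V, (e : Sym2 V) = s(a, b) := by
    intro e
    obtain ⟨a, b, he, -⟩ := hLleg e.1 e.2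
    exact ⟨a, b, he⟩
  choose fa fb hfe using hLdec
  -- the node type and the projection
  set π : V → Option ((G.induce Su).ConnectedComponent ⊕
      {c : G.ConnectedComponent // c ≠ G.connectedComponentMk u}) := fun x =>
    if hx : x ∈ Su then some (Sum.inl ((G.induce Su).connectedComponentMk ⟨x, hx⟩))
    else if hc : G.connectedComponentMk x ≠ G.connectedComponentMk u then
      some (Sum.inr ⟨G.connectedComponentMk x, hc⟩)
    else none
    with hπdef
  have hπSu : ∀ (x : V) (hx : x ∈ Su),
      π x = some (Sum.inl ((G.induce Su).connectedComponentMk ⟨x, hx⟩)) := by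
    intro x hx
    simp only [hπdef, dif_pos hx]
  have hπout : ∀ (x : V) (hc : G.connectedComponentMk x ≠ G.connectedComponentMk u),
      x ∉ Su → π x = some (Sum.inr ⟨G.connectedComponentMk x, hc⟩) := by
    intro x hc hx
    simp only [hπdef, dif_neg hx, dif_pos hc]
  -- π is constant along G-edges avoiding u
  have hstepG : ∀ x y : V, x ≠ u → y ≠ u → G.Adj x y → π x = π y := by
    intro x y hxu hyu hadj
    by_cases hx : x ∈ Su
    · have hy : y ∈ Su := ⟨hx.1.trans hadj.reachable, hyu⟩
      rw [hπSu x hx, hπSu y hy]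
      have hadj' : (G.induce Su).Adj ⟨x, hx⟩ ⟨y, hy⟩ := hadj
      rw [ConnectedComponent.sound hadj'.reachable]
    · have hy : y ∉ Su := by
        intro hy
        exact hx ⟨hy.1.trans hadj.symm.reachable, hxu⟩
      have hcx : G.connectedComponentMk x ≠ G.connectedComponentMk u := by
        intro h
        exact hx ⟨(ConnectedComponent.exact h).symm, hxu⟩
      have hcy : G.connectedComponentMk y ≠ G.connectedComponentMk u := by
        intro h
        exact hy ⟨(ConnectedComponent.exact h).symm, hyu⟩
      rw [hπout x hcx hx, hπout y hcy hy]
      exact congrArg (fun c => some (Sum.inr c))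
        (Subtype.ext (ConnectedComponent.sound hadj.reachable))
  -- edge sets
  set L₀ : Set (Sym2 V) := {e ∈ L | u ∉ e ∧ ∀ z ∈ e, K.Reachable u z} with hL₀def
  set F₀ : Set (_ × _) :=
    {p | ∃ e : ↑L, (e : Sym2 V) ∈ L₀ ∧ p = (π (fa e), π (fb e))} with hF₀def
  have hF₀card : F₀.ncard ≤ L₀.ncard := by
    have himg : F₀ ⊆ (fun e : ↑L => (π (fa e), π (fb e))) '' {e : ↑L | (e : Sym2 V) ∈ L₀} := by
      rintro p ⟨e, heL₀, rfl⟩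
      exact ⟨e, heL₀, rfl⟩
    refine le_trans (Set.ncard_le_ncard himg (Set.toFinite _)) ?_
    refine le_trans (Set.ncard_image_le (Set.toFinite _)) ?_
    exact Set.ncard_le_ncard_of_injOn Subtype.val (fun e he => he)
      (fun e _ e' _ h => Subtype.ext h) (Set.toFinite _)
  -- walk projection
  have hproj : ∀ (x y : V) (hx : x ≠ u) (hy : y ≠ u), K.Reachable u x →
      (K.induce {t | t ≠ u}).Reachable ⟨x, hx⟩ ⟨y, hy⟩ →
      Relation.ReflTransGen (fun n₁ n₂ => (n₁, n₂) ∈ F₀ ∨ (n₂, n₁) ∈ F₀) (π x) (π y) := by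
    intro x y hx hy hux hr
    obtain ⟨p⟩ := hr
    have main : ∀ (a b : {t : V | t ≠ u}) (p : (K.induce {t | t ≠ u}).Walk a b),
        K.Reachable u a.1 →
        Relation.ReflTransGen (fun n₁ n₂ => (n₁, n₂) ∈ F₀ ∨ (n₂, n₁) ∈ F₀)
          (π a.1) (π b.1) := by
      intro a b p
      induction p with
      | nil => intro _; exact Relation.ReflTransGen.refl
      | @cons a c b hadj p ih =>
          intro hua
          have hKac : K.Adj a.1 c.1 := hadj
          have huc : K.Reachable u c.1 := hua.trans hKac.reachable
          have hstep : Relation.ReflTransGen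
              (fun n₁ n₂ => (n₁, n₂) ∈ F₀ ∨ (n₂, n₁) ∈ F₀) (π a.1) (π c.1) := by
            have hKac' := hKac
            rw [hKdef, sup_L_adj hdisj hLleg] at hKac'
            rcases hKac' with hG | hL
            · rw [hstepG a.1 c.1 a.2 c.2 hG]
            · set eL : ↑L := (⟨s(a.1, c.1), hL⟩ : ↑L) with heLdef
              have heL₀ : (eL : Sym2 V) ∈ L₀ := by
                refine ⟨hL, ?_, ?_⟩
                · rw [Sym2.mem_iff]
                  rintro (h | h)
                  · exact a.2 h.symm
                  · exact c.2 h.symm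
                · intro z hz
                  rw [Sym2.mem_iff] at hz
                  rcases hz with rfl | rfl
                  · exact hua
                  · exact huc
              have hmem : (π (fa eL), π (fb eL)) ∈ F₀ := ⟨eL, heL₀, rfl⟩
              have hdec : s(a.1, c.1) = s(fa eL, fb eL) := hfe eL
              rw [Sym2.eq_iff] at hdec
              rcases hdec with ⟨h1, h2⟩ | ⟨h1, h2⟩
              · rw [← h1, ← h2] at hmem
                exact Relation.ReflTransGen.single (Or.inl hmem)
              · rw [← h1, ← h2] at hmem
                exact Relation.ReflTransGen.single (Or.inr hmem)
          exact hstep.trans (ih huc)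
    exact main ⟨x, hx⟩ ⟨y, hy⟩ p hux
  -- the node set of the component of u
  set T₀ : Set {c : G.ConnectedComponent // c ≠ G.connectedComponentMk u} :=
    {c | ∃ z, G.connectedComponentMk z = c.1 ∧ K.Reachable u z} with hT₀def
  set Snodes : Set (Option ((G.induce Su).ConnectedComponent ⊕
      {c : G.ConnectedComponent // c ≠ G.connectedComponentMk u})) :=
    (fun d => some (Sum.inl d)) '' Set.univ ∪ (fun c => some (Sum.inr c)) '' T₀
    with hSnodesdef
  have hD : Dnum G u = Nat.card ((G.induce Su).ConnectedComponent) := by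
    unfold Dnum
    rw [hSudef]
  have hSnodescard : Snodes.ncard = Dnum G u + T₀.ncard := by
    rw [hSnodesdef]
    rw [Set.ncard_union_eq ?_ (Set.toFinite _) (Set.toFinite _)]
    · congr 1
      · rw [Set.ncard_image_of_injective _ (fun a b h => by simpa using h)]
        rw [Set.ncard_univ, hD]
      · rw [Set.ncard_image_of_injective _ (fun a b h => by simpa using h)]
    · rw [Set.disjoint_left]
      rintro n ⟨d, -, rfl⟩ ⟨c, -, hc⟩
      simp at hc
  have hrep : ∀ n ∈ Snodes, ∃ x : V, x ≠ u ∧ K.Reachable u x ∧ π x = n := by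
    rintro n (⟨d, -, rfl⟩ | ⟨c, hcT₀, rfl⟩)
    · obtain ⟨⟨x, hx⟩, rfl⟩ := d.exists_rep
      exact ⟨x, hx.2, (hx.1.mono le_sup_left : K.Reachable u x), hπSu x hx⟩
    · obtain ⟨z, hz, huz⟩ := hcT₀
      have hcz : G.connectedComponentMk z ≠ G.connectedComponentMk u := by
        rw [hz]; exact c.2
      have hzu : z ≠ u := by
        intro h
        subst h
        exact hcz rfl
      have hznSu : z ∉ Su := by
        intro hzs
        exact hcz (ConnectedComponent.sound hzs.1.symm)
      refine ⟨z, hzu, huz, ?_⟩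
      rw [hπout z hcz hznSu]
      exact congrArg (fun c => some (Sum.inr c)) (Subtype.ext hz)
  have hSnodesconn : ∀ n₁ ∈ Snodes, ∀ n₂ ∈ Snodes,
      Relation.ReflTransGen (fun a b => (a, b) ∈ F₀ ∨ (b, a) ∈ F₀) n₁ n₂ := by
    intro n₁ h₁ n₂ h₂
    obtain ⟨x₁, hx₁u, hux₁, hπ₁⟩ := hrep n₁ h₁
    obtain ⟨x₂, hx₂u, hux₂, hπ₂⟩ := hrep n₂ h₂
    have hKr : K.Reachable x₁ x₂ := hux₁.symm.trans hux₂
    have hbp := biconnPair_of_componentwise hK hKr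
    have hind := hbp.2.2 u hx₁u hx₂u
    rw [← hπ₁, ← hπ₂]
    exact hproj x₁ x₂ hx₁u hx₂u hux₁ hind
  have HZ : Dnum G u + T₀.ncard ≤ L₀.ncard + 1 := by
    rw [← hSnodescard]
    exact le_trans (conn_count F₀.ncard F₀ Snodes le_rfl hSnodesconn)
      (by omega)
  -- components away from u
  set outC : Set G.ConnectedComponent :=
    {c | ∀ z, G.connectedComponentMk z = c → ¬ K.Reachable u z} with houtCdef
  set MergedOut : Set G.ConnectedComponent :=
    {c | c ∈ outC ∧ ∃ z w, G.connectedComponentMk z = c ∧ K.Reachable z w ∧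
      G.connectedComponentMk w ≠ c} with hMOdef
  set SingleNBOut : Set G.ConnectedComponent :=
    {c | c ∈ outC ∧ ¬ IsBlock G c.supp ∧ ¬ ∃ z w, G.connectedComponentMk z = c ∧
      K.Reachable z w ∧ G.connectedComponentMk w ≠ c} with hSNBdef
  set LcrossOut : Set (Sym2 V) :=
    {e ∈ L | (∃ a b, e = s(a, b) ∧ G.connectedComponentMk a ≠ G.connectedComponentMk b) ∧
      ∃ z ∈ e, ¬ K.Reachable u z} with hLcOdef
  set LinnerOut : Set (Sym2 V) :=
    {e ∈ L | (∀ z ∈ e, ∀ w ∈ e, G.connectedComponentMk z = G.connectedComponentMk w) ∧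
      ∀ z ∈ e, ¬ K.Reachable u z} with hLiOdef
  have HM : MergedOut.ncard ≤ LcrossOut.ncard := by
    apply two_incidence_count
      (R := fun c e => ∃ a b, e = s(a, b) ∧ G.connectedComponentMk a = c ∧
        G.connectedComponentMk b ≠ c)
    · rintro c ⟨hcout, z, w, hz, hzw, hw⟩
      subst hz
      obtain ⟨e₁, e₂, h₁L, h₂L, hne, ⟨a₁, b₁, he₁, ha₁, hb₁⟩, ⟨a₂, b₂, he₂, ha₂, hb₂⟩⟩ :=
        merged_two_incident hdisj hLleg hK hzw hw
      refine ⟨e₁, e₂, ?_, ?_, hne, ⟨a₁, b₁, he₁, ha₁, hb₁⟩, ⟨a₂, b₂, he₂, ha₂, hb₂⟩⟩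
      · refine ⟨h₁L, ⟨a₁, b₁, he₁, fun h => hb₁ (by rw [← h]; exact ha₁)⟩, ?_⟩
        exact ⟨a₁, by rw [he₁]; exact Sym2.mem_mk_left _ _, hcout a₁ ha₁⟩
      · refine ⟨h₂L, ⟨a₂, b₂, he₂, fun h => hb₂ (by rw [← h]; exact ha₂)⟩, ?_⟩
        exact ⟨a₂, by rw [he₂]; exact Sym2.mem_mk_left _ _, hcout a₂ ha₂⟩
    · rintro e c₁ - c₂ - c₃ - ⟨a₁, b₁, rfl, ha₁, hb₁⟩ ⟨a₂, b₂, he₂, ha₂, hb₂⟩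
        ⟨a₃, b₃, he₃, ha₃, hb₃⟩
      rw [Sym2.eq_iff] at he₂ he₃
      have h2 : c₂ = G.connectedComponentMk a₁ ∨ c₂ = G.connectedComponentMk b₁ := by
        rcases he₂ with ⟨h, h'⟩ | ⟨h, h'⟩
        · left; rw [← ha₂, h]
        · right; rw [← ha₂, ← h']
      have h3 : c₃ = G.connectedComponentMk a₁ ∨ c₃ = G.connectedComponentMk b₁ := by
        rcases he₃ with ⟨h, h'⟩ | ⟨h, h'⟩
        · left; rw [← ha₃, h]
        · right; rw [← ha₃, ← h']
      rcases h2 with h2 | h2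
      · left; rw [← ha₁, h2]
      · rcases h3 with h3 | h3
        · right; left; rw [← ha₁, h3]
        · right; right; rw [h2, h3]
  have HS : SingleNBOut.ncard ≤ LinnerOut.ncard := by
    have hchoice : ∀ c ∈ SingleNBOut, ∃ e ∈ L, ∀ z ∈ e,
        G.connectedComponentMk z = c := by
      rintro c ⟨hcout, hnb, hnm⟩
      push_neg at hnm
      obtain ⟨x, hxc⟩ : ∃ x, G.connectedComponentMk x = c := c.exists_rep
      rw [← hxc] at hnb hnm ⊢
      exact unmerged_nonblock_inner hdisj hLleg hK hnb hnm
    choose fE hfE1 hfE2 using hchoice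
    set f : G.ConnectedComponent → Sym2 V :=
      fun c => if h : c ∈ SingleNBOut then fE c h else s(u, u) with hfdef
    have hf1 : ∀ c (hc : c ∈ SingleNBOut), f c = fE c hc := by
      intro c hc
      simp only [hfdef, dif_pos hc]
    apply Set.ncard_le_ncard_of_injOn f ?_ ?_ (Set.toFinite _)
    · intro c hc
      rw [hf1 c hc]
      refine ⟨hfE1 c hc, ?_, ?_⟩
      · intro z hz w hw
        rw [hfE2 c hc z hz, hfE2 c hc w hw]
      · intro z hz
        exact hc.1 z (hfE2 c hc z hz)
    · intro c hc c' hc' hcc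
      rw [hf1 c hc, hf1 c' hc'] at hcc
      obtain ⟨a, b, hab, -⟩ := hLleg _ (hfE1 c hc)
      have h1 := hfE2 c hc a (by rw [hab]; exact Sym2.mem_mk_left _ _)
      have h2 := hfE2 c' hc' a (by rw [← hcc, hab]; exact Sym2.mem_mk_left _ _)
      rw [← h1, ← h2]
  have Hm : Cnum G ≤ 1 + T₀.ncard + MergedOut.ncard + SingleNBOut.ncard := by
    have hCnum : Cnum G = ({c : G.ConnectedComponent | ¬ IsBlock G c.supp}).ncard := by
      rw [← Nat.card_coe_set_eq]
      rfl
    rw [hCnum]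
    have hsub : {c : G.ConnectedComponent | ¬ IsBlock G c.supp} ⊆
        {G.connectedComponentMk u} ∪ Subtype.val '' T₀ ∪ MergedOut ∪ SingleNBOut := by
      intro c hc
      by_cases hcu : c = G.connectedComponentMk u
      · exact Or.inl (Or.inl (Or.inl hcu))
      by_cases hreach : ∃ z, G.connectedComponentMk z = c ∧ K.Reachable u z
      · exact Or.inl (Or.inl (Or.inr ⟨⟨c, hcu⟩, hreach, rfl⟩))
      · push_neg at hreach
        have hcout : c ∈ outC := fun z hz hr => hreach z hz hr
        by_cases hmerge : ∃ z w, G.connectedComponentMk z = c ∧ K.Reachable z w ∧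
            G.connectedComponentMk w ≠ c
        · exact Or.inl (Or.inr ⟨hcout, hmerge⟩)
        · exact Or.inr ⟨hcout, hc, hmerge⟩
    refine le_trans (Set.ncard_le_ncard hsub (Set.toFinite _)) ?_
    refine le_trans (Set.ncard_union_le _ _) ?_
    have h1 : ({G.connectedComponentMk u} ∪ Subtype.val '' T₀ ∪ MergedOut).ncard ≤
        1 + T₀.ncard + MergedOut.ncard := by
      refine le_trans (Set.ncard_union_le _ _) ?_
      have h2 : ({G.connectedComponentMk u} ∪ Subtype.val '' T₀).ncard ≤ 1 + T₀.ncard := by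
        refine le_trans (Set.ncard_union_le _ _) ?_
        rw [Set.ncard_singleton, Set.ncard_image_of_injective _ Subtype.coe_injective]
      omega
    omega
  have HL : L₀.ncard + LcrossOut.ncard + LinnerOut.ncard ≤ L.ncard := by
    have hd1 : Disjoint L₀ LcrossOut := by
      rw [Set.disjoint_left]
      rintro e ⟨heL, hu, hall⟩ ⟨-, -, z, hz, hnr⟩
      exact hnr (hall z hz)
    have hd2 : Disjoint L₀ LinnerOut := by
      rw [Set.disjoint_left]
      rintro e ⟨heL, hu, hall⟩ ⟨-, -, hnone⟩
      obtain ⟨a, b, rfl, -⟩ := hLleg e heL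
      exact hnone a (Sym2.mem_mk_left _ _) (hall a (Sym2.mem_mk_left _ _))
    have hd3 : Disjoint LcrossOut LinnerOut := by
      rw [Set.disjoint_left]
      rintro e ⟨-, ⟨a, b, rfl, hab⟩, -⟩ ⟨-, hinner, -⟩
      exact hab (hinner a (Sym2.mem_mk_left _ _) b (Sym2.mem_mk_right _ _))
    have hsubL : L₀ ∪ LcrossOut ∪ LinnerOut ⊆ L := by
      refine Set.union_subset (Set.union_subset ?_ ?_) ?_
      · exact Set.sep_subset _ _
      · exact Set.sep_subset _ _
      · exact Set.sep_subset _ _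
    have heq : (L₀ ∪ LcrossOut ∪ LinnerOut).ncard =
        L₀.ncard + LcrossOut.ncard + LinnerOut.ncard := by
      rw [Set.ncard_union_eq (Set.disjoint_union_left.mpr ⟨hd2, hd3⟩)
        (Set.toFinite _) (Set.toFinite _),
        Set.ncard_union_eq hd1 (Set.toFinite _) (Set.toFinite _)]
    rw [← heq]
    exact Set.ncard_le_ncard hsubL (Set.toFinite _)
  omega

end PartOneMain


section Full

open SimpleGraph

variable {G : SimpleGraph V} {A B : Set V}

lemma full_biconnector [Finite V] (hdisj : Disjoint A B) (hcov : A ∪ B = Set.univ)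
    (hbip : ∀ u v : V, G.Adj u v → (u ∈ A ∧ v ∈ B) ∨ (u ∈ B ∧ v ∈ A))
    (hA : 2 ≤ A.ncard) (hB : 2 ≤ B.ncard) :
    IsBiconnector G A B {e | ∃ a b : V, e = s(a, b) ∧ LegalEdge G A B a b} := by
  classical
  set Lf : Set (Sym2 V) := {e | ∃ a b : V, e = s(a, b) ∧ LegalEdge G A B a b} with hLfdef
  set K := G ⊔ SimpleGraph.fromEdgeSet Lf with hKdef
  have hAB : ∀ x : V, x ∈ A ∨ x ∈ B := by
    intro x
    have : x ∈ A ∪ B := hcov ▸ Set.mem_univ x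
    exact this
  have hnAB : ∀ x : V, x ∈ A → x ∉ B := fun x hx => Set.disjoint_left.mp hdisj hx
  have hKadj : ∀ x y : V, K.Adj x y ↔ ((x ∈ A ∧ y ∈ B) ∨ (x ∈ B ∧ y ∈ A)) := by
    intro x y
    constructor
    · intro h
      rw [hKdef, sup_adj, fromEdgeSet_adj] at h
      rcases h with h | ⟨⟨a, b, he, ha, hb, -⟩, -⟩
      · exact hbip x y h
      · rw [Sym2.eq_iff] at he
        rcases he with ⟨rfl, rfl⟩ | ⟨rfl, rfl⟩
        · exact Or.inl ⟨ha, hb⟩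
        · exact Or.inr ⟨hb, ha⟩
    · intro h
      rw [hKdef, sup_adj, fromEdgeSet_adj]
      rcases h with ⟨hx, hy⟩ | ⟨hx, hy⟩
      · have hne : x ≠ y := fun hh => hnAB x hx (hh ▸ hy)
        by_cases hG : G.Adj x y
        · exact Or.inl hG
        · exact Or.inr ⟨⟨x, y, rfl, hx, hy, hG⟩, hne⟩
      · have hne : x ≠ y := fun hh => hnAB y hy (hh ▸ hx)
        by_cases hG : G.Adj x y
        · exact Or.inl hG
        · refine Or.inr ⟨⟨y, x, Sym2.eq_swap, hy, hx, fun hG' => hG hG'.symm⟩, hne⟩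
  obtain ⟨a₁, a₂, ha₁, ha₂, hane⟩ := (Set.one_lt_ncard_iff (Set.toFinite A)).mp (by omega)
  obtain ⟨b₁, b₂, hb₁, hb₂, hbne⟩ := (Set.one_lt_ncard_iff (Set.toFinite B)).mp (by omega)
  -- connectivity
  have hreach : ∀ x : V, K.Reachable x b₁ := by
    intro x
    rcases hAB x with hx | hx
    · exact ((hKadj x b₁).mpr (Or.inl ⟨hx, hb₁⟩)).reachable
    · exact (((hKadj x a₁).mpr (Or.inr ⟨hx, ha₁⟩)).reachable).trans
        ((hKadj a₁ b₁).mpr (Or.inl ⟨ha₁, hb₁⟩)).reachable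
  have hconn : ∀ x y : V, K.Reachable x y := fun x y => (hreach x).trans (hreach y).symm
  -- biconnectivity pair by pair
  have hbic : ∀ x y : V, BiconnPair K x y := by
    intro x y
    refine ⟨hconn x y, ?_, ?_⟩
    · -- deleting one edge
      intro e he
      induction e with
      | h p q =>
        have hpq : K.Adj p q := he
        -- identify the endpoint sides
        have hsides := (hKadj p q).mp hpq
        -- extract pA ∈ A, qB ∈ B with s(p,q) = s(pA, qB)
        obtain ⟨pA, qB, hpA, hqB, hePQ⟩ :
            ∃ pA qB, pA ∈ A ∧ qB ∈ B ∧ s(p, q) = s(pA, qB) := by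
          rcases hsides with ⟨h1, h2⟩ | ⟨h1, h2⟩
          · exact ⟨p, q, h1, h2, rfl⟩
          · exact ⟨q, p, h2, h1, Sym2.eq_swap⟩
        obtain ⟨b', hb'B, hb'ne⟩ : ∃ b', b' ∈ B ∧ b' ≠ qB := by
          by_cases h : qB = b₁
          · exact ⟨b₂, hb₂, fun hh => hbne (h ▸ hh).symm⟩
          · exact ⟨b₁, hb₁, fun hh => h hh.symm⟩
        obtain ⟨a', ha'A, ha'ne⟩ : ∃ a', a' ∈ A ∧ a' ≠ pA := by
          by_cases h : pA = a₁
          · exact ⟨a₂, ha₂, fun hh => hane (h ▸ hh).symm⟩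
          · exact ⟨a₁, ha₁, fun hh => h hh.symm⟩
        have hsafeAB : ∀ z w : V, z ∈ A → w ∈ B → z ≠ pA ∨ w ≠ qB →
            (K.deleteEdges {s(p, q)}).Adj z w := by
          intro z w hz hw hzw
          rw [deleteEdges_adj]
          refine ⟨(hKadj z w).mpr (Or.inl ⟨hz, hw⟩), ?_⟩
          rw [Set.mem_singleton_iff, hePQ, Sym2.eq_iff]
          rintro (⟨rfl, rfl⟩ | ⟨rfl, rfl⟩)
          · rcases hzw with hh | hh
            · exact hh rfl
            · exact hh rfl
          · exact hnAB z hz hqB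
        have hreach' : ∀ x : V, (K.deleteEdges {s(p, q)}).Reachable x b' := by
          intro x
          rcases hAB x with hx | hx
          · exact (hsafeAB x b' hx hb'B (Or.inr hb'ne)).reachable
          · refine ((hsafeAB a' x ha'A hx (Or.inl ha'ne)).symm.reachable).trans ?_
            exact (hsafeAB a' b' ha'A hb'B (Or.inl ha'ne)).reachable
        exact (hreach' x).trans (hreach' y).symm
    · -- deleting one vertex
      intro w hxw hyw
      obtain ⟨b', hb'B, hb'ne⟩ : ∃ b', b' ∈ B ∧ b' ≠ w := by
        by_cases h : w = b₁
        · exact ⟨b₂, hb₂, fun hh => hbne (h ▸ hh).symm⟩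
        · exact ⟨b₁, hb₁, fun hh => h hh.symm⟩
      obtain ⟨a', ha'A, ha'ne⟩ : ∃ a', a' ∈ A ∧ a' ≠ w := by
        by_cases h : w = a₁
        · exact ⟨a₂, ha₂, fun hh => hane (h ▸ hh).symm⟩
        · exact ⟨a₁, ha₁, fun hh => h hh.symm⟩
      have hreach' : ∀ (z : V) (hz : z ≠ w),
          (K.induce {t | t ≠ w}).Reachable ⟨z, hz⟩ ⟨b', hb'ne⟩ := by
        intro z hz
        rcases hAB z with hzA | hzB
        · have hadj : (K.induce {t | t ≠ w}).Adj ⟨z, hz⟩ ⟨b', hb'ne⟩ :=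
            (hKadj z b').mpr (Or.inl ⟨hzA, hb'B⟩)
          exact hadj.reachable
        · have hadj1 : (K.induce {t | t ≠ w}).Adj ⟨z, hz⟩ ⟨a', ha'ne⟩ :=
            (hKadj z a').mpr (Or.inr ⟨hzB, ha'A⟩)
          have hadj2 : (K.induce {t | t ≠ w}).Adj ⟨a', ha'ne⟩ ⟨b', hb'ne⟩ :=
            (hKadj a' b').mpr (Or.inl ⟨ha'A, hb'B⟩)
          exact hadj1.reachable.trans hadj2.reachable
      exact (hreach' x hxw).trans (hreach' y hyw).symm
  constructor
  · intro e he
    exact he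
  · intro c
    obtain ⟨x₀, hx₀⟩ : ∃ x₀, K.connectedComponentMk x₀ = c := c.exists_rep
    have hsupp : c.supp = Set.univ := by
      apply Set.eq_univ_of_forall
      intro z
      rw [ConnectedComponent.mem_supp_iff, ← hx₀]
      exact ConnectedComponent.sound (hconn z x₀)
    rw [hsupp]
    refine ⟨⟨x₀, Set.mem_univ x₀⟩, fun x _ y _ => hbic x y, fun T hT _ => ?_⟩
    exact Set.eq_univ_of_univ_subset hT ▸ rfl

end Full

theorem stmt_5 [Fintype V] (G : SimpleGraph V) (A B : Set V)
    (hdisj : Disjoint A B) (hcov : A ∪ B = Set.univ)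
    (hbip : ∀ u v : V, G.Adj u v → (u ∈ A ∧ v ∈ B) ∨ (u ∈ B ∧ v ∈ A))
    (hA : 2 ≤ A.ncard) (hB : 2 ≤ B.ncard) :
    eta G A B ≤ Bnum G A B := by
  classical
  have hne : {k | ∃ L, IsBiconnector G A B L ∧ L.ncard = k}.Nonempty :=
    ⟨({e | ∃ a b : V, e = s(a, b) ∧ LegalEdge G A B a b} : Set (Sym2 V)).ncard,
      {e | ∃ a b : V, e = s(a, b) ∧ LegalEdge G A B a b},
      full_biconnector hdisj hcov hbip hA hB, rfl⟩
  have hmem : Bnum G A B ∈ {k | ∃ L, IsBiconnector G A B L ∧ L.ncard = k} :=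
    Nat.sInf_mem hne
  obtain ⟨L, ⟨hLleg, hK⟩, hLcard⟩ := hmem
  rw [eta, max_le_iff]
  constructor
  · have hall : ∀ u : V, Dnum G u + Cnum G ≤ L.ncard + 2 :=
      fun u => part_one hdisj hLleg hK u
    have hVne : Nonempty V := by
      obtain ⟨a, -⟩ := Set.nonempty_of_ncard_ne_zero (show A.ncard ≠ 0 by omega)
      exact ⟨a⟩
    have hsup : (⨆ u : V, Dnum G u) ≤ L.ncard + 2 - Cnum G := by
      apply ciSup_le
      intro u
      have := hall u
      omega
    have hC : Cnum G ≤ L.ncard + 2 := by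
      obtain ⟨u⟩ := hVne
      have := hall u
      omega
    rw [← hLcard]
    omega
  · rw [← hLcard]
    exact part_two hdisj hLleg hK

end
end AugBic
end
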